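/- arXiv:2304.08397 — 8 statements merged into one kernel-verified Lean document; each statement's English description precedes it below -/
import Mathlib

section
/- Let C be a code in C_t(n,k) and let ρ be a monomial transformation of F_q^n. Then ρ(C) also belongs to C_t(n,k), and C and ρ(C) lie in the same connected component of the graph Δ_t(n,k). Consequently, the whole orbit of C under the monomial group is contained in a single connected component of Δ_t(n,k). -/
open Finset

variable (F : Type) [Field F] [Fintype F] [DecidableEq F]

/-- The dual code of a linear code `C ⊆ F^n`, with respect to the standard bilinear form. -/
def dualCode (n : ℕ) (C : Submodule F (Fin n → F)) : Submodule F (Fin n → F) where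
  carrier := {v | ∀ c ∈ C, ∑ i, v i * c i = 0}
  zero_mem' := by intro c _; simp
  add_mem' := by
    intro a b ha hb c hc
    simp only [Set.mem_setOf_eq] at *
    simp [add_mul, Finset.sum_add_distrib, ha c hc, hb c hc]
  smul_mem' := by
    intro r a ha c hc
    simp only [Set.mem_setOf_eq] at *
    simp [smul_eq_mul, mul_assoc, ← Finset.mul_sum, ha c hc]

/-- `goodCode F n t k C` says that `C` is an `[n,k]`-linear code over `F` whose dual minimum
distance is at least `t+1`, i.e. `C ∈ C_t(n,k)`. -/
def goodCode (n t k : ℕ) (C : Submodule F (Fin n → F)) : Prop :=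
  Module.finrank F C = k ∧ ∀ v ∈ dualCode F n C, v ≠ 0 → t + 1 ≤ hammingNorm v

/-- The Grassmann graph `Δ_t(n,k)` of codes in `C_t(n,k)`: two codes are adjacent iff
their intersection has dimension `k-1`. -/
def deltaGraph (n t k : ℕ) : SimpleGraph {C : Submodule F (Fin n → F) // goodCode F n t k C} where
  Adj X Y := X ≠ Y ∧ Module.finrank F ↥(X.1 ⊓ Y.1) = k - 1
  symm := by
    constructor
    rintro X Y ⟨h1, h2⟩
    exact ⟨h1.symm, by rwa [inf_comm]⟩
  loopless := by constructor; rintro X ⟨h1, _⟩; exact h1 rfl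

/-- The graph `Λ_t(n,k)` of codes in `C_t(n,k)`: two codes are adjacent iff
their intersection belongs to `C_t(n,k-1)`. -/
def lambdaGraph (n t k : ℕ) : SimpleGraph {C : Submodule F (Fin n → F) // goodCode F n t k C} where
  Adj X Y := X ≠ Y ∧ goodCode F n t (k-1) (X.1 ⊓ Y.1)
  symm := by
    constructor
    rintro X Y ⟨h1, h2⟩
    exact ⟨h1.symm, by rwa [inf_comm]⟩
  loopless := by constructor; rintro X ⟨h1, _⟩; exact h1 rfl

/-- A code `C ∈ C_t(n,k)` is isolated if no `(k-1)`-dimensional subspace of `C`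
belongs to `C_t(n,k-1)`. -/
def IsIsolated (n t k : ℕ) (C : Submodule F (Fin n → F)) : Prop :=
  ∀ D : Submodule F (Fin n → F), D ≤ C → ¬ goodCode F n t (k-1) D

/-- A monomial transformation of `F^n`: a permutation of the coordinates composed with
multiplication of each coordinate by a nonzero scalar. -/
def IsMonomial (n : ℕ) (ρ : (Fin n → F) ≃ₗ[F] (Fin n → F)) : Prop :=
  ∃ (σ : Equiv.Perm (Fin n)) (d : Fin n → F),
    (∀ i, d i ≠ 0) ∧ ∀ (v : Fin n → F) (i : Fin n), ρ v i = d i * v (σ i)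

/-- `S_s(Ω)`: the set of points (`1`-dimensional subspaces) of `PG(k-1,q)` lying on a subspace
spanned by `s+1` points of `Ω`. (We represent any subspace by the corresponding submodule of
`F^k`, and points of `PG(k-1,q)` by `1`-dimensional submodules.) -/
def satPoints (k s : ℕ) (Ω : Set (Submodule F (Fin k → F))) : Set (Submodule F (Fin k → F)) :=
  {P | ∃ T : Finset (Submodule F (Fin k → F)), ↑T ⊆ Ω ∧ T.card = s + 1 ∧ P ≤ T.sup id}

/-- A set `Ω` of points of `PG(k-1,q)` is `s`-saturating if `S_s(Ω)` is the whole point set of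
`PG(k-1,q)` while (for `s ≥ 1`) `S_{s-1}(Ω)` is not. -/
def IsSaturating (k s : ℕ) (Ω : Set (Submodule F (Fin k → F))) : Prop :=
  (∀ P : Submodule F (Fin k → F), Module.finrank F P = 1 → P ∈ satPoints F k s Ω) ∧
  (1 ≤ s → ¬ ∀ P : Submodule F (Fin k → F), Module.finrank F P = 1 → P ∈ satPoints F k (s-1) Ω)

section AuxLemmas
variable {n t k : ℕ}

lemma mem_dualCode {n : ℕ} {C : Submodule F (Fin n → F)} {v : Fin n → F} :
    v ∈ dualCode F n C ↔ ∀ c ∈ C, ∑ i, v i * c i = 0 := Iff.rfl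

lemma good_map (ρ : (Fin n → F) ≃ₗ[F] (Fin n → F)) (hρ : IsMonomial F n ρ)
    (C : Submodule F (Fin n → F)) (hC : goodCode F n t k C) :
    goodCode F n t k (Submodule.map ρ.toLinearMap C) := by
  obtain ⟨σ, d, hd, hval⟩ := hρ
  constructor
  · rw [LinearEquiv.finrank_map_eq]; exact hC.1
  · intro v hv hv0
    set w : Fin n → F := fun j => v (σ.symm j) * d (σ.symm j) with hw
    have hwC : w ∈ dualCode F n C := by
      rw [mem_dualCode]
      intro c hc
      have := (mem_dualCode F).mp hv (ρ c) ⟨c, hc, rfl⟩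
      rw [← this]
      refine Fintype.sum_equiv σ.symm _ _ fun j => ?_
      simp only [hw, Equiv.apply_symm_apply, hval]
      ring
    have hw0 : w ≠ 0 := by
      obtain ⟨i, hi⟩ := Function.ne_iff.mp hv0
      refine Function.ne_iff.mpr ⟨σ i, ?_⟩
      simp only [hw, Equiv.symm_apply_apply, Pi.zero_apply]
      exact mul_ne_zero hi (hd i)
    have hnorm : hammingNorm w = hammingNorm v := by
      unfold hammingNorm
      refine Finset.card_bij' (fun j _ => σ.symm j) (fun i _ => σ i) ?_ ?_ ?_ ?_
      · intro j hj
        simp only [Finset.mem_filter, Finset.mem_univ, true_and] at hj ⊢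
        intro h; exact hj (by simp [hw, h])
      · intro i hi
        simp only [Finset.mem_filter, Finset.mem_univ, true_and] at hi ⊢
        simp only [hw, Equiv.symm_apply_apply]
        exact mul_ne_zero hi (hd i)
      · intro j _; simp
      · intro i _; simp
    rw [← hnorm]
    exact hC.2 w hwC hw0


lemma reach_of_eq {V : Type*} {G : SimpleGraph V} {a b : V} (h : a = b) :
    G.Reachable a b := h ▸ SimpleGraph.Reachable.refl a

lemma step_lemma (τ : (Fin n → F) ≃ₗ[F] (Fin n → F)) (hτ : IsMonomial F n τ)
    (φ : (Fin n → F) →ₗ[F] F) (hφ : ∀ v, φ v = 0 → τ v = v)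
    (X : Submodule F (Fin n → F)) (hX : goodCode F n t k X) :
    ∃ h' : goodCode F n t k (Submodule.map τ.toLinearMap X),
      (deltaGraph F n t k).Reachable ⟨X, hX⟩ ⟨Submodule.map τ.toLinearMap X, h'⟩ := by
  have hY : goodCode F n t k (Submodule.map τ.toLinearMap X) := good_map F τ hτ X hX
  refine ⟨hY, ?_⟩
  set Y := Submodule.map τ.toLinearMap X with hYdef
  set K := X ⊓ Y with hK
  have hKX : K ≤ X := inf_le_left
  -- lower bound on finrank K
  set ψ : ↥X →ₗ[F] F := φ.comp X.subtype with hψ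
  have hker : k - 1 ≤ Module.finrank F ↥(LinearMap.ker ψ) := by
    have h1 := LinearMap.finrank_range_add_finrank_ker ψ
    have h2 : Module.finrank F ↥(LinearMap.range ψ) ≤ 1 := by
      simpa using Submodule.finrank_le (LinearMap.range ψ)
    rw [hX.1] at h1
    omega
  have hmapker : Submodule.map X.subtype (LinearMap.ker ψ) ≤ K := by
    rintro x ⟨⟨y, hy⟩, hyk, rfl⟩
    have hφy : φ y = 0 := hyk
    refine ⟨hy, ⟨y, hy, hφ y hφy⟩⟩
  have hlow : k - 1 ≤ Module.finrank F ↥K := by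
    calc k - 1 ≤ Module.finrank F ↥(LinearMap.ker ψ) := hker
    _ = Module.finrank F ↥(Submodule.map X.subtype (LinearMap.ker ψ)) :=
        (Submodule.finrank_map_subtype_eq X _).symm
    _ ≤ Module.finrank F ↥K := Submodule.finrank_mono hmapker
  have hhigh : Module.finrank F ↥K ≤ k := hX.1 ▸ Submodule.finrank_mono hKX
  by_cases heq : Module.finrank F ↥K = k
  · -- X = Y
    have h1 : K = X := Submodule.eq_of_le_of_finrank_eq hKX (by rw [heq, hX.1])
    have h2 : K = Y := Submodule.eq_of_le_of_finrank_eq inf_le_right (by rw [heq, hY.1])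
    have : X = Y := h1 ▸ h2
    exact reach_of_eq (Subtype.ext this)
  · have hne : X ≠ Y := by
      intro h
      apply heq
      rw [hK, ← h, inf_idem, hX.1]
    refine SimpleGraph.Adj.reachable ?_
    exact ⟨fun h => hne (congrArg Subtype.val h),
      show Module.finrank F ↥K = k - 1 by omega⟩


/-- coordinate permutation as a linear equivalence -/
def permMap (n : ℕ) (σ : Equiv.Perm (Fin n)) : (Fin n → F) ≃ₗ[F] (Fin n → F) where
  toFun v := v ∘ σ
  invFun v := v ∘ σ.symm
  map_add' a b := rfl
  map_smul' r a := rfl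
  left_inv v := by funext i; simp
  right_inv v := by funext i; simp

/-- diagonal scaling on a finite set of coordinates -/
def diagMap (n : ℕ) (d : Fin n → F) (hd : ∀ i, d i ≠ 0) (s : Finset (Fin n)) :
    (Fin n → F) ≃ₗ[F] (Fin n → F) where
  toFun v i := if i ∈ s then d i * v i else v i
  invFun v i := if i ∈ s then (d i)⁻¹ * v i else v i
  map_add' a b := by funext i; by_cases h : i ∈ s <;> simp [h, mul_add]
  map_smul' r a := by
    funext i; by_cases h : i ∈ s <;> simp [h, smul_eq_mul] <;> ring
  left_inv := by
    intro v; funext i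
    by_cases h : i ∈ s <;> simp [h, inv_mul_cancel_left₀ (hd i)]
  right_inv := by
    intro v; funext i
    by_cases h : i ∈ s <;> simp [h, mul_inv_cancel_left₀ (hd i)]

lemma permMap_monomial (σ : Equiv.Perm (Fin n)) : IsMonomial F n (permMap F n σ) :=
  ⟨σ, 1, fun _ => one_ne_zero, fun v i => by simp [permMap]⟩

lemma diagMap_monomial (d : Fin n → F) (hd : ∀ i, d i ≠ 0) (s : Finset (Fin n)) :
    IsMonomial F n (diagMap F n d hd s) := by
  refine ⟨1, fun i => if i ∈ s then d i else 1, fun i => ?_, fun v i => ?_⟩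
  · by_cases h : i ∈ s <;> simp [h, hd i]
  · by_cases h : i ∈ s <;> simp [diagMap, h]

lemma map_comp_eq (ρ₁ ρ₂ ρ₃ : (Fin n → F) ≃ₗ[F] (Fin n → F))
    (h : ∀ v, ρ₃ v = ρ₂ (ρ₁ v)) (X : Submodule F (Fin n → F)) :
    Submodule.map ρ₃.toLinearMap X
      = Submodule.map ρ₂.toLinearMap (Submodule.map ρ₁.toLinearMap X) := by
  rw [show ρ₃.toLinearMap = ρ₂.toLinearMap ∘ₗ ρ₁.toLinearMap from LinearMap.ext h,
    Submodule.map_comp]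

lemma reach_perm (σ : Equiv.Perm (Fin n)) :
    ∀ (X : Submodule F (Fin n → F)) (hX : goodCode F n t k X),
    ∃ h' : goodCode F n t k (Submodule.map (permMap F n σ).toLinearMap X),
      (deltaGraph F n t k).Reachable ⟨X, hX⟩
        ⟨Submodule.map (permMap F n σ).toLinearMap X, h'⟩ := by
  refine Equiv.Perm.swap_induction_on σ ?_ ?_
  · intro X hX
    have e : Submodule.map (permMap F n 1).toLinearMap X = X := by
      ext v
      constructor
      · rintro ⟨w, hw, rfl⟩; simpa [permMap] using hw
      · intro hv; exact ⟨v, hv, rfl⟩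
    refine ⟨by rwa [e], reach_of_eq (Subtype.ext e.symm)⟩
  · intro g x y hxy ih X hX
    have hswap := step_lemma F (permMap F n (Equiv.swap x y))
      (permMap_monomial F (Equiv.swap x y))
      ((LinearMap.proj x : (Fin n → F) →ₗ[F] F) - LinearMap.proj y)
      (fun v hv => by
        have hv' : v x = v y := by
          have h0 : v x - v y = 0 := hv
          exact sub_eq_zero.mp h0
        funext i
        show v (Equiv.swap x y i) = v i
        rcases eq_or_ne i x with rfl | hix
        · rw [Equiv.swap_apply_left]; exact hv'.symm
        rcases eq_or_ne i y with rfl | hiy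
        · rw [Equiv.swap_apply_right]; exact hv'
        · rw [Equiv.swap_apply_of_ne_of_ne hix hiy])
      X hX
    obtain ⟨h1, r1⟩ := hswap
    obtain ⟨h2, r2⟩ := ih _ h1
    have e : Submodule.map (permMap F n (Equiv.swap x y * g)).toLinearMap X
        = Submodule.map (permMap F n g).toLinearMap
          (Submodule.map (permMap F n (Equiv.swap x y)).toLinearMap X) :=
      map_comp_eq F _ _ _ (fun v => rfl) X
    refine ⟨by rwa [e], ?_⟩
    refine r1.trans (r2.trans (reach_of_eq (Subtype.ext e.symm)))

lemma reach_diag (d : Fin n → F) (hd : ∀ i, d i ≠ 0) (s : Finset (Fin n)) :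
    ∀ (X : Submodule F (Fin n → F)) (hX : goodCode F n t k X),
    ∃ h' : goodCode F n t k (Submodule.map (diagMap F n d hd s).toLinearMap X),
      (deltaGraph F n t k).Reachable ⟨X, hX⟩
        ⟨Submodule.map (diagMap F n d hd s).toLinearMap X, h'⟩ := by
  induction s using Finset.induction with
  | empty =>
    intro X hX
    have e : Submodule.map (diagMap F n d hd ∅).toLinearMap X = X := by
      ext v
      constructor
      · rintro ⟨w, hw, rfl⟩; simpa [diagMap] using hw
      · intro hv; exact ⟨v, hv, by funext i; simp [diagMap]⟩
    refine ⟨by rwa [e], reach_of_eq (Subtype.ext e.symm)⟩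
  | @insert a s ha ih =>
    intro X hX
    obtain ⟨h1, r1⟩ := ih X hX
    have hstep := step_lemma F (diagMap F n d hd {a}) (diagMap_monomial F d hd {a})
      (LinearMap.proj a)
      (fun v hv => by
        funext i
        show (if i ∈ ({a} : Finset (Fin n)) then d i * v i else v i) = v i
        rcases eq_or_ne i a with rfl | hia
        · simp [show v i = 0 from hv]
        · simp [hia])
      _ h1
    obtain ⟨h2, r2⟩ := hstep
    have e : Submodule.map (diagMap F n d hd (insert a s)).toLinearMap X
        = Submodule.map (diagMap F n d hd {a}).toLinearMap
          (Submodule.map (diagMap F n d hd s).toLinearMap X) := by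
      refine map_comp_eq F _ _ _ (fun v => ?_) X
      funext i
      show (if i ∈ insert a s then d i * v i else v i)
        = if i ∈ ({a} : Finset (Fin n)) then d i * (if i ∈ s then d i * v i else v i)
          else (if i ∈ s then d i * v i else v i)
      rcases eq_or_ne i a with rfl | hia
      · simp [ha]
      · by_cases hi : i ∈ s <;> simp [hia, hi]
    refine ⟨by rwa [e], ?_⟩
    exact r1.trans (r2.trans (reach_of_eq (Subtype.ext e.symm)))


end AuxLemmas

/-- The image of a code `C ∈ C_t(n,k)` under a monomial transformation `ρ`
again belongs to `C_t(n,k)`, and lies in the same connected component of `Δ_t(n,k)` as `C`;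
hence the orbit of `C` under the monomial group lies in one connected component. -/
theorem monomial_orbit_in_connected_component_delta
    {n k t : ℕ} (hk : 0 < k) (hkn : k < n) (ht : t ≤ k)
    (C : Submodule F (Fin n → F)) (hC : goodCode F n t k C)
    (ρ : (Fin n → F) ≃ₗ[F] (Fin n → F)) (hρ : IsMonomial F n ρ) :
    ∃ h' : goodCode F n t k (Submodule.map ρ.toLinearMap C),
      (deltaGraph F n t k).Reachable ⟨C, hC⟩ ⟨Submodule.map ρ.toLinearMap C, h'⟩ := by
  obtain ⟨σ, d, hd, hval⟩ := hρ
  have e : Submodule.map ρ.toLinearMap C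
      = Submodule.map (diagMap F n d hd Finset.univ).toLinearMap
        (Submodule.map (permMap F n σ).toLinearMap C) := by
    refine map_comp_eq F _ _ _ (fun v => ?_) C
    funext i
    show ρ v i = if i ∈ Finset.univ then d i * (v ∘ σ) i else (v ∘ σ) i
    simp [hval]
  obtain ⟨h1, r1⟩ := reach_perm F σ C hC
  obtain ⟨h2, r2⟩ := reach_diag F d hd Finset.univ _ h1
  exact ⟨by rwa [e], r1.trans (r2.trans (reach_of_eq (Subtype.ext e.symm)))⟩
end

section
/- Let C, C' ∈ C_t(n,k) and suppose D and D' are (k−1)-dimensional subspaces of C and C' respectively with D, D' ∈ C_t(n,k−1). If D and D' lie in the same connected component of the graph Δ_t(n,k−1), then C and C' lie in the same connected component of the graph Λ_t(n,k). -/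
open Finset

variable (F : Type) [Field F] [Fintype F] [DecidableEq F]

lemma dualCode_anti {n : ℕ} {A B : Submodule F (Fin n → F)} (h : A ≤ B) :
    dualCode F n B ≤ dualCode F n A := fun v hv c hc => hv c (h hc)

lemma lambda_key {n k t : ℕ} (hk : 0 < k) {C C' D : Submodule F (Fin n → F)}
    (hC : goodCode F n t k C) (hC' : goodCode F n t k C') (hD : goodCode F n t (k-1) D)
    (h1 : D ≤ C) (h2 : D ≤ C') :
    (lambdaGraph F n t k).Reachable ⟨C, hC⟩ ⟨C', hC'⟩ := by
  by_cases hcc : C = C'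
  · subst hcc; exact SimpleGraph.Reachable.refl _
  · apply SimpleGraph.Adj.reachable
    refine ⟨fun h => hcc (congrArg Subtype.val h), ?_⟩
    have hle : D ≤ C ⊓ C' := le_inf h1 h2
    have hlt : C ⊓ C' < C := by
      refine lt_of_le_of_ne inf_le_left (fun h => hcc ?_)
      exact Submodule.eq_of_le_of_finrank_eq (h ▸ inf_le_right) (hC.1.trans hC'.1.symm)
    have h3 : Module.finrank F ↥(C ⊓ C') < k :=
      hC.1 ▸ Submodule.finrank_lt_finrank_of_lt hlt
    have h4 : k - 1 ≤ Module.finrank F ↥(C ⊓ C') :=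
      hD.1 ▸ Submodule.finrank_mono hle
    have h5 : Module.finrank F ↥(C ⊓ C') = k - 1 := by omega
    have hDeq : D = C ⊓ C' :=
      Submodule.eq_of_le_of_finrank_eq hle (hD.1.trans h5.symm)
    exact hDeq ▸ hD

lemma lambda_aux {n k t : ℕ} (hk : 0 < k) :
    ∀ (d d' : {C : Submodule F (Fin n → F) // goodCode F n t (k-1) C})
      (_ : (deltaGraph F n t (k-1)).Walk d d')
      (C C' : Submodule F (Fin n → F)) (hC : goodCode F n t k C) (hC' : goodCode F n t k C')
      (_ : d.1 ≤ C) (_ : d'.1 ≤ C'),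
      (lambdaGraph F n t k).Reachable ⟨C, hC⟩ ⟨C', hC'⟩ := by
  intro d d' w
  induction w with
  | @nil u => intro C C' hC hC' h1 h2; exact lambda_key F hk hC hC' u.2 h1 h2
  | @cons u v w' h p ih =>
    intro C C' hC hC' h1 h2
    obtain ⟨hne, hdim⟩ := h
    have hk2 : 2 ≤ k := by
      by_contra hlt
      have hk1 : k = 1 := by omega
      have hu : u.1 = ⊥ := by
        have h := u.2.1
        exact Submodule.finrank_eq_zero.mp (by omega)
      have hv : v.1 = ⊥ := by
        have h := v.2.1
        exact Submodule.finrank_eq_zero.mp (by omega)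
      exact hne (Subtype.ext (hu.trans hv.symm))
    have hsum := Submodule.finrank_sup_add_finrank_inf_eq u.1 v.1
    rw [u.2.1, v.2.1, hdim] at hsum
    have hB : goodCode F n t k (u.1 ⊔ v.1) := by
      constructor
      · omega
      · intro x hx hxne
        exact u.2.2 x (dualCode_anti F le_sup_left hx) hxne
    exact (lambda_key F hk hC hB u.2 h1 le_sup_left).trans
      (ih (u.1 ⊔ v.1) C' hB hC' le_sup_right h2)

/-- If `C, C' ∈ C_t(n,k)` contain `(k-1)`-dimensional subcodes
`D, D' ∈ C_t(n,k-1)` lying in the same connected component of `Δ_t(n,k-1)`, then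
`C` and `C'` lie in the same connected component of `Λ_t(n,k)`. -/
theorem reachable_lambda_of_reachable_delta_subcodes
    {n k t : ℕ} (hk : 0 < k) (hkn : k < n) (ht : t ≤ k)
    (C C' : Submodule F (Fin n → F)) (hC : goodCode F n t k C) (hC' : goodCode F n t k C')
    (D D' : Submodule F (Fin n → F)) (hDC : D ≤ C) (hD'C' : D' ≤ C')
    (hD : goodCode F n t (k-1) D) (hD' : goodCode F n t (k-1) D')
    (hreach : (deltaGraph F n t (k-1)).Reachable ⟨D, hD⟩ ⟨D', hD'⟩) :
    (lambdaGraph F n t k).Reachable ⟨C, hC⟩ ⟨C', hC'⟩ := by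
  obtain ⟨w⟩ := hreach
  exact lambda_aux F hk ⟨D, hD⟩ ⟨D', hD'⟩ w C C' hC hC' hDC hD'C'
end

section
/- Suppose the graph Δ_t(n,k−1) is connected. Then all elements of C_t(n,k) \ I_t(n,k) (the non-isolated codes) belong to the same connected component of Λ_t(n,k); in particular, the induced subgraph Λ̃_t(n,k) is connected. -/
open Finset

variable (F : Type) [Field F] [Fintype F] [DecidableEq F]

lemma dualCode_antitone_aux {n : ℕ} {C D : Submodule F (Fin n → F)} (h : C ≤ D) :
    dualCode F n D ≤ dualCode F n C := fun _ hv c hc => hv c (h hc)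

lemma sup_goodCode_aux {n t k : ℕ} (hk : 0 < k) {D D' : Submodule F (Fin n → F)}
    (hD : goodCode F n t (k-1) D) (hD' : goodCode F n t (k-1) D')
    (hne : D ≠ D') (hinf : Module.finrank F ↥(D ⊓ D') = k - 1 - 1) :
    goodCode F n t k (D ⊔ D') := by
  have hk2 : 2 ≤ k := by
    by_contra h
    have hk1 : k = 1 := by omega
    subst hk1
    have h0 : D = ⊥ := by
      have := hD.1
      simp only [Nat.sub_self] at this
      exact Submodule.finrank_eq_zero.mp this
    have h0' : D' = ⊥ := by
      have := hD'.1
      simp only [Nat.sub_self] at this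
      exact Submodule.finrank_eq_zero.mp this
    exact hne (h0.trans h0'.symm)
  constructor
  · have hsum := Submodule.finrank_sup_add_finrank_inf_eq D D'
    rw [hD.1, hD'.1, hinf] at hsum
    omega
  · intro v hv hv0
    exact hD.2 v (dualCode_antitone_aux F le_sup_left hv) hv0

lemma inf_goodCode_aux {n t k : ℕ} (hk : 0 < k) {D X Y : Submodule F (Fin n → F)}
    (hD : goodCode F n t (k-1) D) (hX : goodCode F n t k X) (hY : goodCode F n t k Y)
    (hDX : D ≤ X) (hDY : D ≤ Y) (hne : X ≠ Y) :
    goodCode F n t (k-1) (X ⊓ Y) := by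
  have hle : D ≤ X ⊓ Y := le_inf hDX hDY
  have hXY : X ⊓ Y ≠ X := by
    intro h
    apply hne
    have hXle : X ≤ Y := by rw [← h]; exact inf_le_right
    exact Submodule.eq_of_le_of_finrank_eq hXle (hX.1.trans hY.1.symm)
  have hlt : X ⊓ Y < X := lt_of_le_of_ne inf_le_left hXY
  have h1 : Module.finrank F ↥(X ⊓ Y) < k := by
    have h := Submodule.finrank_lt_finrank_of_lt hlt
    rwa [hX.1] at h
  have h2 : k - 1 ≤ Module.finrank F ↥(X ⊓ Y) := by
    have h := Submodule.finrank_mono hle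
    rwa [hD.1] at h
  have heq : Module.finrank F ↥(X ⊓ Y) = k - 1 := by omega
  have hDeq : D = X ⊓ Y := Submodule.eq_of_le_of_finrank_eq hle (hD.1.trans heq.symm)
  rw [← hDeq]; exact hD

lemma reach_of_common_aux {n t k : ℕ} (hk : 0 < k) {D : Submodule F (Fin n → F)}
    (hD : goodCode F n t (k-1) D)
    (X Y : {C : Submodule F (Fin n → F) // goodCode F n t k C})
    (hX : ¬ IsIsolated F n t k X.1) (hY : ¬ IsIsolated F n t k Y.1)
    (hDX : D ≤ X.1) (hDY : D ≤ Y.1) :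
    ((lambdaGraph F n t k).induce
        {X : {C : Submodule F (Fin n → F) // goodCode F n t k C} |
          ¬ IsIsolated F n t k X.1}).Reachable ⟨X, hX⟩ ⟨Y, hY⟩ := by
  by_cases hxy : X = Y
  · subst hxy
    exact SimpleGraph.Reachable.refl _
  · have hne1 : X.1 ≠ Y.1 := fun h => hxy (Subtype.ext h)
    exact SimpleGraph.Adj.reachable
      ⟨hxy, inf_goodCode_aux F hk hD X.2 Y.2 hDX hDY hne1⟩

lemma walk_reach_aux {n t k : ℕ} (hk : 0 < k)
    {D D' : {C : Submodule F (Fin n → F) // goodCode F n t (k-1) C}}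
    (w : (deltaGraph F n t (k-1)).Walk D D') :
    ∀ (X Y : {C : Submodule F (Fin n → F) // goodCode F n t k C})
      (hX : ¬ IsIsolated F n t k X.1) (hY : ¬ IsIsolated F n t k Y.1),
      D.1 ≤ X.1 → D'.1 ≤ Y.1 →
      ((lambdaGraph F n t k).induce
        {X : {C : Submodule F (Fin n → F) // goodCode F n t k C} |
          ¬ IsIsolated F n t k X.1}).Reachable ⟨X, hX⟩ ⟨Y, hY⟩ := by
  induction w with
  | @nil u =>
    intro X Y hX hY hDX hDY
    exact reach_of_common_aux F hk u.2 X Y hX hY hDX hDY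
  | @cons D b D' h w ih =>
    intro X Y hX hY hDX hDY
    obtain ⟨hne, hinf⟩ := h
    have hne1 : D.1 ≠ b.1 := fun hh => hne (Subtype.ext hh)
    have hZ : goodCode F n t k (D.1 ⊔ b.1) :=
      sup_goodCode_aux F hk D.2 b.2 hne1 hinf
    have hZni : ¬ IsIsolated F n t k (D.1 ⊔ b.1) :=
      fun hiso => hiso D.1 le_sup_left D.2
    have r1 := reach_of_common_aux F hk D.2 X ⟨D.1 ⊔ b.1, hZ⟩ hX hZni hDX le_sup_left
    have r2 := ih ⟨D.1 ⊔ b.1, hZ⟩ Y hZni hY le_sup_right hDY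
    exact r1.trans r2

/-- If `Δ_t(n,k-1)` is connected, then all non-isolated codes of `C_t(n,k)`
lie in the same connected component of `Λ_t(n,k)`; in particular the induced subgraph
`Λ̃_t(n,k)` on the non-isolated codes is connected. -/
theorem lambdaTilde_connected_of_delta_connected
    {n k t : ℕ} (hk : 0 < k) (hkn : k < n) (ht : t ≤ k)
    (hconn : (deltaGraph F n t (k-1)).Preconnected) :
    (∀ X Y : {C : Submodule F (Fin n → F) // goodCode F n t k C},
        ¬ IsIsolated F n t k X.1 → ¬ IsIsolated F n t k Y.1 →
        (lambdaGraph F n t k).Reachable X Y) ∧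
    ((lambdaGraph F n t k).induce
        {X : {C : Submodule F (Fin n → F) // goodCode F n t k C} |
          ¬ IsIsolated F n t k X.1}).Preconnected := by
  have hpre : ((lambdaGraph F n t k).induce
      {X : {C : Submodule F (Fin n → F) // goodCode F n t k C} |
        ¬ IsIsolated F n t k X.1}).Preconnected := by
    rintro ⟨X, hX⟩ ⟨Y, hY⟩
    have hX' := hX
    have hY' := hY
    simp only [Set.mem_setOf_eq, IsIsolated, not_forall, not_not] at hX' hY'
    obtain ⟨D, hDle, hDgood⟩ := hX'
    obtain ⟨D', hD'le, hD'good⟩ := hY'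
    obtain ⟨w⟩ := hconn ⟨D, hDgood⟩ ⟨D', hD'good⟩
    exact walk_reach_aux F hk w X Y hX hY hDle hD'le
  refine ⟨?_, hpre⟩
  intro X Y hX hY
  have h := hpre ⟨X, hX⟩ ⟨Y, hY⟩
  exact h.map (SimpleGraph.Embedding.induce _).toHom
end

section
/- Suppose C, C' ∈ C_t(n,k) are equivalent codes (i.e., C' = ρ(C) for some monomial transformation ρ of F_q^n) and neither is isolated. Then C and C' belong to the same connected component of the graph Λ_t(n,k). -/
open Finset

variable (F : Type) [Field F] [Fintype F] [DecidableEq F]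

namespace Scratch

variable {F}

lemma mem_dualCode {n : ℕ} {C : Submodule F (Fin n → F)} {v : Fin n → F} :
    v ∈ dualCode F n C ↔ ∀ c ∈ C, ∑ i, v i * c i = 0 := Iff.rfl

/-- diagonal equivalence -/
def diagEquiv {n : ℕ} (c : Fin n → F) (hc : ∀ i, c i ≠ 0) :
    (Fin n → F) ≃ₗ[F] (Fin n → F) :=
  LinearEquiv.piCongrRight (fun i => LinearEquiv.smulOfNeZero F F (c i) (hc i))

lemma diagEquiv_apply {n : ℕ} (c : Fin n → F) (hc : ∀ i, c i ≠ 0) (v : Fin n → F) (i : Fin n) :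
    diagEquiv c hc v i = c i * v i := rfl

def permEquiv {n : ℕ} (σ : Equiv.Perm (Fin n)) : (Fin n → F) ≃ₗ[F] (Fin n → F) :=
  LinearEquiv.funCongrLeft F F σ

lemma permEquiv_apply {n : ℕ} (σ : Equiv.Perm (Fin n)) (v : Fin n → F) (i : Fin n) :
    permEquiv (F := F) σ v i = v (σ i) := rfl

lemma hammingNorm_congr {n : ℕ} {u v : Fin n → F} (h : ∀ i, u i ≠ 0 ↔ v i ≠ 0) :
    hammingNorm u = hammingNorm v := by
  unfold hammingNorm
  congr 1
  exact Finset.filter_congr (fun i _ => by simpa using h i)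

lemma hammingNorm_comp_perm {n : ℕ} (v : Fin n → F) (σ : Equiv.Perm (Fin n)) :
    hammingNorm (fun i => v (σ i)) = hammingNorm v := by
  unfold hammingNorm
  apply Finset.card_bij (fun i _ => σ i)
  · intro a ha; simp_all
  · intro a ha b hb hab; exact σ.injective hab
  · intro b hb; exact ⟨σ.symm b, by simp_all, by simp⟩


set_option linter.unusedSectionVars false

lemma good_of_le {n t m m' : ℕ} {D X : Submodule F (Fin n → F)}
    (hD : goodCode F n t m D) (hle : D ≤ X) (hfr : Module.finrank F X = m') :
    goodCode F n t m' X :=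
  ⟨hfr, fun v hv hv0 => hD.2 v (fun c hc => hv c (hle hc)) hv0⟩

lemma good_map_diag {n t m : ℕ} (c : Fin n → F) (hc : ∀ i, c i ≠ 0)
    {C : Submodule F (Fin n → F)} (h : goodCode F n t m C) :
    goodCode F n t m (C.map (diagEquiv c hc).toLinearMap) := by
  constructor
  · rw [LinearEquiv.finrank_map_eq]; exact h.1
  · intro v hv hv0
    set u : Fin n → F := fun j => c j * v j with hu_def
    have hu : u ∈ dualCode F n C := by
      intro w hw
      have h2 := hv ((diagEquiv c hc) w) ⟨w, hw, rfl⟩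
      calc ∑ j, u j * w j = ∑ j, v j * (diagEquiv c hc w j) := by
            apply Finset.sum_congr rfl; intro j _; rw [diagEquiv_apply, hu_def]; ring
        _ = 0 := h2
    have hnorm : hammingNorm u = hammingNorm v := by
      apply hammingNorm_congr
      intro i
      simp [hu_def, hc i]
    have hu0 : u ≠ 0 := by
      intro h0
      apply hv0
      funext j
      have : c j * v j = 0 := congrFun h0 j
      rcases mul_eq_zero.1 this with h' | h'
      · exact absurd h' (hc j)
      · exact h'
    rw [← hnorm]
    exact h.2 u hu hu0

lemma good_map_perm {n t m : ℕ} (σ : Equiv.Perm (Fin n))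
    {C : Submodule F (Fin n → F)} (h : goodCode F n t m C) :
    goodCode F n t m (C.map (permEquiv (F := F) σ).toLinearMap) := by
  constructor
  · rw [LinearEquiv.finrank_map_eq]; exact h.1
  · intro v hv hv0
    set u : Fin n → F := fun j => v (σ.symm j) with hu_def
    have hu : u ∈ dualCode F n C := by
      intro w hw
      have h2 := hv ((permEquiv (F := F) σ) w) ⟨w, hw, rfl⟩
      have h3 : ∑ i, v i * w (σ i) = 0 := h2
      calc ∑ j, u j * w j = ∑ i, v i * w (σ i) := by
            rw [← Equiv.sum_comp σ (fun j => u j * w j)]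
            apply Finset.sum_congr rfl
            intro i _
            simp [hu_def]
        _ = 0 := h3
    have hnorm : hammingNorm u = hammingNorm v := hammingNorm_comp_perm v σ.symm
    have hu0 : u ≠ 0 := by
      intro h0
      apply hv0
      funext j
      have := congrFun h0 (σ j)
      simpa [hu_def] using this
    rw [← hnorm]
    exact h.2 u hu hu0


lemma noniso_map {n t k : ℕ} (g : (Fin n → F) ≃ₗ[F] (Fin n → F))
    (hpres : ∀ m (D : Submodule F (Fin n → F)), goodCode F n t m D →
      goodCode F n t m (D.map g.toLinearMap))
    {C : Submodule F (Fin n → F)} (hni : ¬ IsIsolated F n t k C) :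
    ¬ IsIsolated F n t k (C.map g.toLinearMap) := by
  unfold IsIsolated at hni ⊢
  push_neg at hni ⊢
  obtain ⟨D, hDC, hD⟩ := hni
  exact ⟨D.map g.toLinearMap, Submodule.map_mono hDC, hpres _ D hD⟩

lemma reach_aux {n t k : ℕ} (hk : 0 < k)
    (g : (Fin n → F) ≃ₗ[F] (Fin n → F))
    (hpres : ∀ m (D : Submodule F (Fin n → F)), goodCode F n t m D →
      goodCode F n t m (D.map g.toLinearMap))
    (C X D0 : Submodule F (Fin n → F))
    (hC : goodCode F n t k C) (hX : goodCode F n t k X)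
    (hgX : X.map g.toLinearMap = X)
    (hD0 : goodCode F n t (k-1) D0) (hD0C : D0 ≤ C) (hD0X : D0 ≤ X)
    (hgC : goodCode F n t k (C.map g.toLinearMap)) :
    (lambdaGraph F n t k).Reachable ⟨C, hC⟩ ⟨C.map g.toLinearMap, hgC⟩ := by
  by_cases hCX : C = X
  · subst hCX
    have hv : (⟨C.map g.toLinearMap, hgC⟩ : {D : Submodule F (Fin n → F) // goodCode F n t k D})
        = ⟨C, hC⟩ := Subtype.ext hgX
    rw [hv]
  · -- C ⊓ X = D0
    have hfrC : Module.finrank F C = k := hC.1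
    have hfrX : Module.finrank F X = k := hX.1
    have hfrD0 : Module.finrank F D0 = k - 1 := hD0.1
    have h1 : D0 ≤ C ⊓ X := le_inf hD0C hD0X
    have h2 : Module.finrank F ↥(C ⊓ X) ≤ k := hfrC ▸ Submodule.finrank_mono inf_le_left
    have h3 : k - 1 ≤ Module.finrank F ↥(C ⊓ X) := hfrD0 ▸ Submodule.finrank_mono h1
    have h4 : Module.finrank F ↥(C ⊓ X) ≠ k := by
      intro h
      have hCeq : C ⊓ X = C := Submodule.eq_of_le_of_finrank_eq inf_le_left (h.trans hfrC.symm)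
      have hCle : C ≤ X := hCeq ▸ inf_le_right
      exact hCX (Submodule.eq_of_le_of_finrank_eq hCle (hfrC.trans hfrX.symm))
    have h5 : Module.finrank F ↥(C ⊓ X) = k - 1 := by omega
    have hinf : C ⊓ X = D0 :=
      (Submodule.eq_of_le_of_finrank_eq h1 (hfrD0.trans h5.symm)).symm
    have adj1 : (lambdaGraph F n t k).Adj ⟨C, hC⟩ ⟨X, hX⟩ := by
      refine ⟨fun h => hCX (congrArg Subtype.val h), ?_⟩
      show goodCode F n t (k-1) (C ⊓ X)
      rw [hinf]; exact hD0
    by_cases hgCX : C.map g.toLinearMap = X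
    · have hv : (⟨C.map g.toLinearMap, hgC⟩ : {D : Submodule F (Fin n → F) // goodCode F n t k D})
          = ⟨X, hX⟩ := Subtype.ext hgCX
      rw [hv]
      exact adj1.reachable
    · have adj2 : (lambdaGraph F n t k).Adj ⟨X, hX⟩ ⟨C.map g.toLinearMap, hgC⟩ := by
        refine ⟨fun h => hgCX (congrArg Subtype.val h).symm, ?_⟩
        show goodCode F n t (k-1) (X ⊓ C.map g.toLinearMap)
        have hmi : Submodule.map g.toLinearMap (X ⊓ C)
            = Submodule.map g.toLinearMap X ⊓ Submodule.map g.toLinearMap C :=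
          Submodule.map_inf g.toLinearMap g.injective
        have : X ⊓ C.map g.toLinearMap = D0.map g.toLinearMap := by
          rw [← hgX, ← hmi, inf_comm, hinf]
        rw [this]
        exact hpres _ D0 hD0
      exact adj1.reachable.trans adj2.reachable

lemma finrank_sup_span_singleton {n : ℕ} {D : Submodule F (Fin n → F)} {w : Fin n → F}
    (hw : w ∉ D) :
    Module.finrank F ↥(D ⊔ Submodule.span F {w}) = Module.finrank F ↥D + 1 := by
  have hw0 : w ≠ 0 := fun h => hw (h ▸ D.zero_mem)
  have hinf : D ⊓ Submodule.span F {w} = ⊥ := by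
    rw [eq_bot_iff]
    rintro x hx
    have hx1 : x ∈ D := hx.1
    have hx2 : x ∈ Submodule.span F {w} := hx.2
    obtain ⟨a, rfl⟩ := Submodule.mem_span_singleton.1 hx2
    rcases eq_or_ne a 0 with rfl | ha
    · simp
    · exact absurd (by simpa [smul_smul, inv_mul_cancel₀ ha] using D.smul_mem a⁻¹ hx1) hw
  have := Submodule.finrank_sup_add_finrank_inf_eq D (Submodule.span F {w})
  rw [hinf, finrank_span_singleton hw0] at this
  simpa using this

def scaleFun {n : ℕ} (j : Fin n) (a : F) : Fin n → F := fun i => if i = j then a else 1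

lemma scaleFun_ne {n : ℕ} {j : Fin n} {a : F} (ha : a ≠ 0) : ∀ i, scaleFun j a i ≠ 0 := by
  intro i; unfold scaleFun; split <;> simp [ha]

def scaleEquiv {n : ℕ} (j : Fin n) (a : F) (ha : a ≠ 0) : (Fin n → F) ≃ₗ[F] (Fin n → F) :=
  diagEquiv (scaleFun j a) (scaleFun_ne ha)

lemma scaleEquiv_eq_add {n : ℕ} (j : Fin n) (a : F) (ha : a ≠ 0) (v : Fin n → F) :
    scaleEquiv j a ha v = v + ((a - 1) * v j) • (Pi.single j (1:F) : Fin n → F) := by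
  funext i
  rcases eq_or_ne i j with rfl | hij
  · simp [scaleEquiv, diagEquiv_apply, scaleFun]; ring
  · simp [scaleEquiv, diagEquiv_apply, scaleFun, hij, Pi.single_apply]

lemma map_scale_of_single_mem {n : ℕ} (j : Fin n) (a : F) (ha : a ≠ 0)
    (Y : Submodule F (Fin n → F)) (hY : Pi.single j 1 ∈ Y) :
    Y.map (scaleEquiv j a ha).toLinearMap = Y := by
  apply Submodule.eq_of_le_of_finrank_eq
  · rintro x ⟨v, hv, rfl⟩
    show scaleEquiv j a ha v ∈ Y
    rw [scaleEquiv_eq_add]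
    exact Y.add_mem hv (Y.smul_mem _ hY)
  · rw [LinearEquiv.finrank_map_eq]

lemma step_scale {n t k : ℕ} (hk : 0 < k) (j : Fin n) (a : F) (ha : a ≠ 0)
    (C : Submodule F (Fin n → F)) (hC : goodCode F n t k C) (hni : ¬ IsIsolated F n t k C)
    (hgC : goodCode F n t k (C.map (scaleEquiv j a ha).toLinearMap)) :
    (lambdaGraph F n t k).Reachable ⟨C, hC⟩ ⟨C.map (scaleEquiv j a ha).toLinearMap, hgC⟩ := by
  by_cases hej : Pi.single j 1 ∈ C
  · have hv : (⟨C.map (scaleEquiv j a ha).toLinearMap, hgC⟩ :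
        {D : Submodule F (Fin n → F) // goodCode F n t k D}) = ⟨C, hC⟩ :=
      Subtype.ext (map_scale_of_single_mem j a ha C hej)
    rw [hv]
  · unfold IsIsolated at hni
    push_neg at hni
    obtain ⟨D0, hD0C, hD0⟩ := hni
    have hejD0 : Pi.single j 1 ∉ D0 := fun h => hej (hD0C h)
    set X := D0 ⊔ Submodule.span F {Pi.single j (1:F)} with hX_def
    have hfrX : Module.finrank F ↥X = k := by
      rw [hX_def, finrank_sup_span_singleton hejD0, hD0.1]
      omega
    have hXgood : goodCode F n t k X := good_of_le hD0 le_sup_left hfrX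
    have hejX : Pi.single j 1 ∈ X :=
      Submodule.mem_sup_right (Submodule.subset_span (Set.mem_singleton _))
    exact reach_aux hk (scaleEquiv j a ha)
      (fun m D hD => good_map_diag _ _ hD)
      C X D0 hC hXgood (map_scale_of_single_mem j a ha X hejX)
      hD0 hD0C le_sup_left hgC

lemma permEquiv_swap_eq_add {n : ℕ} (x y : Fin n) (hxy : x ≠ y) (v : Fin n → F) :
    permEquiv (F := F) (Equiv.swap x y) v
      = v + (v y - v x) • ((Pi.single x (1:F) : Fin n → F) - Pi.single y 1) := by
  funext i
  rcases eq_or_ne i x with rfl | hix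
  · simp [permEquiv_apply, Equiv.swap_apply_left, Pi.single_apply, hxy.symm, hxy]
  · rcases eq_or_ne i y with rfl | hiy
    · simp [permEquiv_apply, Equiv.swap_apply_right, Pi.single_apply, hxy.symm]
    · simp [permEquiv_apply, Equiv.swap_apply_of_ne_of_ne hix hiy,
        Pi.single_apply, hix, hiy]

lemma map_map_swap {n : ℕ} (x y : Fin n) (Y : Submodule F (Fin n → F)) :
    (Y.map (permEquiv (F := F) (Equiv.swap x y)).toLinearMap).map
      (permEquiv (F := F) (Equiv.swap x y)).toLinearMap = Y := by
  rw [← Submodule.map_comp]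
  have : (permEquiv (F := F) (Equiv.swap x y)).toLinearMap.comp
      (permEquiv (F := F) (Equiv.swap x y)).toLinearMap = LinearMap.id := by
    apply LinearMap.ext
    intro v
    funext i
    show v (Equiv.swap x y (Equiv.swap x y i)) = v i
    rw [Equiv.swap_apply_self]
  rw [this, Submodule.map_id]

set_option maxHeartbeats 1000000 in
lemma step_swap {n t k : ℕ} (hk : 0 < k) (hkn : k < n) (x y : Fin n) (hxy : x ≠ y)
    (C : Submodule F (Fin n → F)) (hC : goodCode F n t k C) (hni : ¬ IsIsolated F n t k C)
    (hgC : goodCode F n t k (C.map (permEquiv (F := F) (Equiv.swap x y)).toLinearMap)) :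
    (lambdaGraph F n t k).Reachable ⟨C, hC⟩
      ⟨C.map (permEquiv (F := F) (Equiv.swap x y)).toLinearMap, hgC⟩ := by
  set τ := permEquiv (F := F) (Equiv.swap x y) with hτ_def
  have hpres : ∀ m (D : Submodule F (Fin n → F)), goodCode F n t m D →
      goodCode F n t m (D.map τ.toLinearMap) := fun m D hD => good_map_perm _ hD
  unfold IsIsolated at hni
  push_neg at hni
  obtain ⟨D0, hD0C, hD0⟩ := hni
  have hni' : ¬ IsIsolated F n t k C := by
    unfold IsIsolated; push_neg; exact ⟨D0, hD0C, hD0⟩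
  by_cases hD : D0.map τ.toLinearMap = D0
  · -- Case B : D0 is swap-invariant; extend by a symmetric vector
    set f : (Fin n → F) →ₗ[F] F := (LinearMap.proj x : (Fin n → F) →ₗ[F] F) - (LinearMap.proj y : (Fin n → F) →ₗ[F] F) with hf_def
    have hfx : f (Pi.single x (1:F)) = 1 := by
      simp [hf_def, Pi.single_apply, hxy.symm]
    have hW : ∃ w, w ∈ LinearMap.ker f ∧ w ∉ D0 := by
      by_contra h
      push_neg at h
      have hle : LinearMap.ker f ≤ D0 := fun w hw => h w hw
      have h1 : Module.finrank F ↥(LinearMap.ker f) ≤ k - 1 :=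
        hD0.1 ▸ Submodule.finrank_mono hle
      have h2 := LinearMap.finrank_range_add_finrank_ker f
      rw [Module.finrank_fin_fun] at h2
      have h3 : Module.finrank F ↥(LinearMap.range f) ≤ 1 :=
        (Submodule.finrank_le _).trans_eq (Module.finrank_self F)
      omega
    obtain ⟨w, hwW, hwD0⟩ := hW
    have hwxy : w x = w y := by
      have : f w = 0 := hwW
      have h2 : w x - w y = 0 := this
      exact sub_eq_zero.1 h2
    have hτw : τ w = w := by
      funext i
      show w (Equiv.swap x y i) = w i
      rcases eq_or_ne i x with rfl | hix
      · rw [Equiv.swap_apply_left]; exact hwxy.symm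
      · rcases eq_or_ne i y with rfl | hiy
        · rw [Equiv.swap_apply_right]; exact hwxy
        · rw [Equiv.swap_apply_of_ne_of_ne hix hiy]
    set X := D0 ⊔ Submodule.span F {w} with hX_def
    have hfrX : Module.finrank F ↥X = k := by
      rw [hX_def, finrank_sup_span_singleton hwD0, hD0.1]
      omega
    have hXgood : goodCode F n t k X := good_of_le hD0 le_sup_left hfrX
    have hmapX : X.map τ.toLinearMap = X := by
      rw [hX_def, Submodule.map_sup, hD, Submodule.map_span, Set.image_singleton]
      show D0 ⊔ Submodule.span F {τ w} = _
      rw [hτw]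
    exact reach_aux hk τ hpres C X D0 hC hXgood hmapX hD0 hD0C le_sup_left hgC
  · -- Case A : X = D0 ⊔ τ(D0)
    set u := (Pi.single x (1:F) : Fin n → F) - Pi.single y 1 with hu_def
    set X := D0 ⊔ D0.map τ.toLinearMap with hX_def
    have hfrD0' : Module.finrank F ↥(D0.map τ.toLinearMap) = k - 1 := by
      rw [LinearEquiv.finrank_map_eq]; exact hD0.1
    have hXle : X ≤ D0 ⊔ Submodule.span F {u} := by
      rw [hX_def]
      apply sup_le le_sup_left
      rintro _ ⟨v, hv, rfl⟩
      show τ v ∈ _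
      rw [hτ_def, permEquiv_swap_eq_add x y hxy v, ← hu_def]
      exact Submodule.add_mem _ (Submodule.mem_sup_left hv)
        (Submodule.smul_mem _ _ (Submodule.mem_sup_right
          (Submodule.subset_span (Set.mem_singleton _))))
    have hfrb : Module.finrank F ↥(D0 ⊔ Submodule.span F {u}) ≤ k := by
      by_cases hu' : u ∈ D0
      · have hsle : Submodule.span F {u} ≤ D0 := by
          rw [Submodule.span_le]; simpa using hu'
        rw [sup_eq_left.2 hsle, hD0.1]
        omega
      · rw [finrank_sup_span_singleton hu', hD0.1]
        omega
    have h2 : Module.finrank F ↥X ≤ k := (Submodule.finrank_mono hXle).trans hfrb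
    have h3 : k - 1 ≤ Module.finrank F ↥X := hD0.1 ▸ Submodule.finrank_mono le_sup_left
    have h4 : Module.finrank F ↥X ≠ k - 1 := by
      intro h
      have hXD0 : D0 = X :=
        Submodule.eq_of_le_of_finrank_eq le_sup_left (hD0.1.trans h.symm)
      have hle2 : D0.map τ.toLinearMap ≤ D0 := by
        have hle3 : D0.map τ.toLinearMap ≤ X := by rw [hX_def]; exact le_sup_right
        rwa [← hXD0] at hle3
      exact hD (Submodule.eq_of_le_of_finrank_eq hle2 (hfrD0'.trans hD0.1.symm))
    have hfrX : Module.finrank F ↥X = k := by omega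
    have hXgood : goodCode F n t k X := good_of_le hD0 le_sup_left hfrX
    have hmapX : X.map τ.toLinearMap = X := by
      rw [hX_def, Submodule.map_sup, map_map_swap, sup_comm]
    exact reach_aux hk τ hpres C X D0 hC hXgood hmapX hD0 hD0C le_sup_left hgC

lemma reach_perm {n t k : ℕ} (hk : 0 < k) (hkn : k < n) (σ : Equiv.Perm (Fin n)) :
    ∀ (C : Submodule F (Fin n → F)) (hC : goodCode F n t k C)
      (_ : ¬ IsIsolated F n t k C)
      (h2 : goodCode F n t k (C.map (permEquiv (F := F) σ).toLinearMap)),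
      (lambdaGraph F n t k).Reachable ⟨C, hC⟩
        ⟨C.map (permEquiv (F := F) σ).toLinearMap, h2⟩ := by
  refine Equiv.Perm.swap_induction_on
    (motive := fun σ => ∀ (C : Submodule F (Fin n → F)) (hC : goodCode F n t k C)
      (_ : ¬ IsIsolated F n t k C)
      (h2 : goodCode F n t k (C.map (permEquiv (F := F) σ).toLinearMap)),
      (lambdaGraph F n t k).Reachable ⟨C, hC⟩
        ⟨C.map (permEquiv (F := F) σ).toLinearMap, h2⟩) σ ?_ ?_
  · intro C hC hni h2
    have hid : (permEquiv (F := F) (1 : Equiv.Perm (Fin n))).toLinearMap = LinearMap.id := by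
      apply LinearMap.ext; intro v; rfl
    have hmap : C.map (permEquiv (F := F) (1 : Equiv.Perm (Fin n))).toLinearMap = C := by
      rw [hid, Submodule.map_id]
    have hv : (⟨C.map (permEquiv (F := F) (1 : Equiv.Perm (Fin n))).toLinearMap, h2⟩ :
        {D : Submodule F (Fin n → F) // goodCode F n t k D}) = ⟨C, hC⟩ := Subtype.ext hmap
    rw [hv]
  · intro f x y hxy IH C hC hni h2
    have hcomp : C.map (permEquiv (F := F) (Equiv.swap x y * f)).toLinearMap
        = (C.map (permEquiv (F := F) (Equiv.swap x y)).toLinearMap).map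
            (permEquiv (F := F) f).toLinearMap := by
      rw [← Submodule.map_comp]
      congr 1
    have h1g : goodCode F n t k (C.map (permEquiv (F := F) (Equiv.swap x y)).toLinearMap) :=
      good_map_perm _ hC
    have h1ni : ¬ IsIsolated F n t k (C.map (permEquiv (F := F) (Equiv.swap x y)).toLinearMap) :=
      noniso_map _ (fun m D hD => good_map_perm _ hD) hni
    have h2' : goodCode F n t k
        ((C.map (permEquiv (F := F) (Equiv.swap x y)).toLinearMap).map
          (permEquiv (F := F) f).toLinearMap) := by
      rw [← hcomp]; exact h2
    have hv : (⟨C.map (permEquiv (F := F) (Equiv.swap x y * f)).toLinearMap, h2⟩ :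
        {D : Submodule F (Fin n → F) // goodCode F n t k D})
        = ⟨(C.map (permEquiv (F := F) (Equiv.swap x y)).toLinearMap).map
            (permEquiv (F := F) f).toLinearMap, h2'⟩ := Subtype.ext hcomp
    rw [hv]
    exact (step_swap hk hkn x y hxy C hC hni h1g).trans
      (IH (C.map (permEquiv (F := F) (Equiv.swap x y)).toLinearMap) h1g h1ni h2')

def maskFun {n : ℕ} (d : Fin n → F) (s : Finset (Fin n)) : Fin n → F :=
  fun i => if i ∈ s then d i else 1

lemma maskFun_ne {n : ℕ} {d : Fin n → F} (hd : ∀ i, d i ≠ 0) (s : Finset (Fin n)) :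
    ∀ i, maskFun d s i ≠ 0 := by
  intro i; unfold maskFun; split
  · exact hd i
  · exact one_ne_zero

lemma reach_diag_aux {n t k : ℕ} (hk : 0 < k) (d : Fin n → F) (hd : ∀ i, d i ≠ 0)
    (s : Finset (Fin n)) :
    ∀ (C : Submodule F (Fin n → F)) (hC : goodCode F n t k C)
      (_ : ¬ IsIsolated F n t k C)
      (h2 : goodCode F n t k (C.map (diagEquiv (maskFun d s) (maskFun_ne hd s)).toLinearMap)),
      (lambdaGraph F n t k).Reachable ⟨C, hC⟩
        ⟨C.map (diagEquiv (maskFun d s) (maskFun_ne hd s)).toLinearMap, h2⟩ := by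
  induction s using Finset.induction_on with
  | empty =>
    intro C hC hni h2
    have hid : (diagEquiv (maskFun d ∅) (maskFun_ne hd ∅)).toLinearMap = LinearMap.id := by
      apply LinearMap.ext; intro v; funext i
      show maskFun d ∅ i * v i = v i
      simp [maskFun]
    have hmap : C.map (diagEquiv (maskFun d ∅) (maskFun_ne hd ∅)).toLinearMap = C := by
      rw [hid, Submodule.map_id]
    have hv : (⟨C.map (diagEquiv (maskFun d ∅) (maskFun_ne hd ∅)).toLinearMap, h2⟩ :
        {D : Submodule F (Fin n → F) // goodCode F n t k D}) = ⟨C, hC⟩ := Subtype.ext hmap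
    rw [hv]
  | @insert j s hj IH =>
    intro C hC hni h2
    have hsplit : (diagEquiv (maskFun d (insert j s)) (maskFun_ne hd _)).toLinearMap
        = (scaleEquiv j (d j) (hd j)).toLinearMap.comp
            (diagEquiv (maskFun d s) (maskFun_ne hd s)).toLinearMap := by
      apply LinearMap.ext; intro v; funext i
      show maskFun d (insert j s) i * v i
        = scaleFun j (d j) i * (maskFun d s i * v i)
      rcases eq_or_ne i j with rfl | hij
      · simp [maskFun, scaleFun, hj]
      · simp [maskFun, scaleFun, hij, Finset.mem_insert]
    have hcomp : C.map (diagEquiv (maskFun d (insert j s)) (maskFun_ne hd _)).toLinearMap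
        = (C.map (diagEquiv (maskFun d s) (maskFun_ne hd s)).toLinearMap).map
            (scaleEquiv j (d j) (hd j)).toLinearMap := by
      rw [hsplit, Submodule.map_comp]
    have h1g : goodCode F n t k (C.map (diagEquiv (maskFun d s) (maskFun_ne hd s)).toLinearMap) :=
      good_map_diag _ _ hC
    have h1ni : ¬ IsIsolated F n t k
        (C.map (diagEquiv (maskFun d s) (maskFun_ne hd s)).toLinearMap) :=
      noniso_map _ (fun m D hD => good_map_diag _ _ hD) hni
    have h2' : goodCode F n t k
        ((C.map (diagEquiv (maskFun d s) (maskFun_ne hd s)).toLinearMap).map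
          (scaleEquiv j (d j) (hd j)).toLinearMap) := by
      rw [← hcomp]; exact h2
    have hv : (⟨C.map (diagEquiv (maskFun d (insert j s)) (maskFun_ne hd _)).toLinearMap, h2⟩ :
        {D : Submodule F (Fin n → F) // goodCode F n t k D})
        = ⟨(C.map (diagEquiv (maskFun d s) (maskFun_ne hd s)).toLinearMap).map
            (scaleEquiv j (d j) (hd j)).toLinearMap, h2'⟩ := Subtype.ext hcomp
    rw [hv]
    exact (IH C hC hni h1g).trans
      (step_scale hk j (d j) (hd j) _ h1g h1ni h2')

lemma reach_diag {n t k : ℕ} (hk : 0 < k) (d : Fin n → F) (hd : ∀ i, d i ≠ 0)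
    (C : Submodule F (Fin n → F)) (hC : goodCode F n t k C)
    (hni : ¬ IsIsolated F n t k C)
    (h2 : goodCode F n t k (C.map (diagEquiv d hd).toLinearMap)) :
    (lambdaGraph F n t k).Reachable ⟨C, hC⟩ ⟨C.map (diagEquiv d hd).toLinearMap, h2⟩ := by
  have heqv : (diagEquiv (maskFun d Finset.univ) (maskFun_ne hd _)).toLinearMap
      = (diagEquiv d hd).toLinearMap := by
    apply LinearMap.ext; intro v; funext i
    show maskFun d Finset.univ i * v i = d i * v i
    simp [maskFun]
  have h2' : goodCode F n t k
      (C.map (diagEquiv (maskFun d Finset.univ) (maskFun_ne hd _)).toLinearMap) := by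
    rw [heqv]; exact h2
  have hv : (⟨C.map (diagEquiv d hd).toLinearMap, h2⟩ :
      {D : Submodule F (Fin n → F) // goodCode F n t k D})
      = ⟨C.map (diagEquiv (maskFun d Finset.univ) (maskFun_ne hd _)).toLinearMap, h2'⟩ :=
    Subtype.ext (congrArg (fun f => Submodule.map f C) heqv.symm)
  rw [hv]
  exact reach_diag_aux hk d hd Finset.univ C hC hni h2'

end Scratch

open Scratch in
/-- If `C, C' ∈ C_t(n,k)` are equivalent codes (under a monomial transformation)
and neither is isolated, then they lie in the same connected component of `Λ_t(n,k)`. -/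
theorem equivalent_nonisolated_reachable_lambda
    {n k t : ℕ} (hk : 0 < k) (hkn : k < n) (ht : t ≤ k)
    (C C' : Submodule F (Fin n → F)) (hC : goodCode F n t k C) (hC' : goodCode F n t k C')
    (hni : ¬ IsIsolated F n t k C) (hni' : ¬ IsIsolated F n t k C')
    (ρ : (Fin n → F) ≃ₗ[F] (Fin n → F)) (hρ : IsMonomial F n ρ)
    (heq : C' = Submodule.map ρ.toLinearMap C) :
    (lambdaGraph F n t k).Reachable ⟨C, hC⟩ ⟨C', hC'⟩ := by
  obtain ⟨σ, d, hd, hform⟩ := hρ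
  subst heq
  have hρeq : ρ.toLinearMap
      = (diagEquiv d hd).toLinearMap.comp (permEquiv (F := F) σ).toLinearMap := by
    apply LinearMap.ext; intro v; funext i
    show ρ v i = (diagEquiv d hd) ((permEquiv (F := F) σ) v) i
    rw [diagEquiv_apply, permEquiv_apply]
    exact hform v i
  have hsplit : C.map ρ.toLinearMap
      = (C.map (permEquiv (F := F) σ).toLinearMap).map (diagEquiv d hd).toLinearMap := by
    rw [hρeq, Submodule.map_comp]
  have hperm_good : goodCode F n t k (C.map (permEquiv (F := F) σ).toLinearMap) :=
    good_map_perm _ hC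
  have hperm_ni : ¬ IsIsolated F n t k (C.map (permEquiv (F := F) σ).toLinearMap) :=
    noniso_map _ (fun m D hD => good_map_perm _ hD) hni
  have hfinal_good : goodCode F n t k
      ((C.map (permEquiv (F := F) σ).toLinearMap).map (diagEquiv d hd).toLinearMap) := by
    rw [← hsplit]; exact hC'
  have hv : (⟨C.map ρ.toLinearMap, hC'⟩ :
      {D : Submodule F (Fin n → F) // goodCode F n t k D})
      = ⟨(C.map (permEquiv (F := F) σ).toLinearMap).map (diagEquiv d hd).toLinearMap,
          hfinal_good⟩ := Subtype.ext hsplit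
  rw [hv]
  exact (reach_perm hk hkn σ C hC hni hperm_good).trans
    (reach_diag hk d hd _ hperm_good hperm_ni hfinal_good)
end

section
/- Let C ∈ C_1(n,k) with basis b_1,...,b_k, and let P_i := (b_1(i),...,b_k(i)) ∈ F_q^k for i = 1,...,n be the columns of the corresponding generator matrix. Then C is isolated if and only if every nonzero vector of F_q^k is a nonzero scalar multiple of some column P_i, i.e., the columns are vector representatives of all the points of the projective space PG(k−1,q). -/
open Finset

variable (F : Type) [Field F] [Fintype F] [DecidableEq F]

section AuxIsolated

set_option linter.unusedSectionVars false

/-- Auxiliary: the dot-product-with-`v` linear functional. -/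
def dotMap {k : ℕ} (v : Fin k → F) : (Fin k → F) →ₗ[F] F where
  toFun x := ∑ j, x j * v j
  map_add' a b := by simp [add_mul, Finset.sum_add_distrib]
  map_smul' r a := by simp [mul_assoc, Finset.mul_sum]

lemma evalComb {n k : ℕ} {C : Submodule F (Fin n → F)} (b : Module.Basis (Fin k) F ↥C)
    (x : Fin k → F) (i : Fin n) :
    ((b.equivFun.symm x : C) : Fin n → F) i = ∑ j, x j * (b j : Fin n → F) i := by
  rw [Module.Basis.equivFun_symm_apply]
  simp [AddSubmonoidClass.coe_finset_sum, Finset.sum_apply]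

lemma hammingNorm_single_one (n : ℕ) (i : Fin n) :
    hammingNorm ((Pi.single i 1 : Fin n → F)) = 1 := by
  simp [hammingNorm, Pi.single_apply, Finset.filter_eq']

lemma single_one_ne_zero (n : ℕ) (i : Fin n) : (Pi.single i 1 : Fin n → F) ≠ 0 := by
  intro h
  have := congrFun h i
  simp at this

lemma sum_single_mul (n : ℕ) (i : Fin n) (c : Fin n → F) :
    ∑ i', (Pi.single i 1 : Fin n → F) i' * c i' = c i := by
  simp [Pi.single_apply, ite_mul]

lemma col_ne_zero {n k : ℕ} {C : Submodule F (Fin n → F)} (hC : goodCode F n 1 k C)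
    (b : Module.Basis (Fin k) F ↥C) (i : Fin n) :
    (fun j => (b j : Fin n → F) i) ≠ 0 := by
  intro h0
  have hmem : (Pi.single i 1 : Fin n → F) ∈ dualCode F n C := by
    intro c hc
    rw [sum_single_mul]
    have hc' : c = ((b.equivFun.symm (b.equivFun ⟨c, hc⟩) : C) : Fin n → F) :=
      congrArg Subtype.val (b.equivFun.symm_apply_apply ⟨c, hc⟩).symm
    rw [hc', evalComb]
    refine Finset.sum_eq_zero fun j _ => ?_
    have : (b j : Fin n → F) i = 0 := congrFun h0 j
    rw [this, mul_zero]
  have h2 := hC.2 _ hmem (single_one_ne_zero F n i)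
  rw [hammingNorm_single_one] at h2
  omega

end AuxIsolated

/-- A code `C ∈ C_1(n,k)` with basis `b` is isolated iff every nonzero vector
of `F^k` is a nonzero scalar multiple of some column of the corresponding generator matrix,
i.e., the columns represent all points of `PG(k-1,q)`. -/
theorem isolated_nondegenerate_iff_all_points
    {n k : ℕ} (hk : 0 < k) (hkn : k < n)
    (C : Submodule F (Fin n → F)) (hC : goodCode F n 1 k C)
    (b : Module.Basis (Fin k) F ↥C) :
    IsIsolated F n 1 k C ↔
      ∀ v : Fin k → F, v ≠ 0 →
        ∃ (i : Fin n) (c : F), c ≠ 0 ∧ v = c • (fun j => (b j : Fin n → F) i) := by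
  constructor
  · -- isolated → all points covered
    intro hIso
    by_contra hcon
    push_neg at hcon
    obtain ⟨v, hv0, hv⟩ := hcon
    obtain ⟨j₀, hj₀⟩ : ∃ j₀, v j₀ ≠ 0 := Function.ne_iff.mp hv0
    set f : ↥C →ₗ[F] F := (dotMap F v).comp b.equivFun.toLinearMap with hfdef
    set D : Submodule F (Fin n → F) := (LinearMap.ker f).map C.subtype with hDdef
    have hDle : D ≤ C := Submodule.map_subtype_le _ _
    have hfφ : ∀ x : Fin k → F, f (b.equivFun.symm x) = ∑ j, x j * v j := by
      intro x
      simp [hfdef, dotMap]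
    have hsurj : Function.Surjective f := by
      intro a
      refine ⟨b.equivFun.symm ((a * (v j₀)⁻¹) • (Pi.single j₀ 1 : Fin k → F)), ?_⟩
      rw [hfφ]
      simp only [Pi.smul_apply, Pi.single_apply, smul_eq_mul, mul_ite, mul_one, mul_zero,
        ite_mul, zero_mul]
      rw [Finset.sum_ite_eq' Finset.univ j₀ (fun j => a * (v j₀)⁻¹ * v j)]
      simp [hj₀]
    have hrank : Module.finrank F ↥D = k - 1 := by
      have h1 := LinearMap.finrank_range_add_finrank_ker f
      rw [LinearMap.range_eq_top.mpr hsurj, finrank_top, Module.finrank_self, hC.1] at h1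
      have h2 : Module.finrank F ↥D = Module.finrank F ↥(LinearMap.ker f) :=
        Submodule.finrank_map_subtype_eq C (LinearMap.ker f)
      omega
    have hmemD : ∀ x : Fin k → F, (∑ j, x j * v j = 0) →
        ((b.equivFun.symm x : C) : Fin n → F) ∈ D := by
      intro x hx
      exact Submodule.mem_map.mpr ⟨b.equivFun.symm x, by rwa [LinearMap.mem_ker, hfφ], rfl⟩
    have hgood : goodCode F n 1 (k - 1) D := by
      refine ⟨hrank, ?_⟩
      intro w hw hw0
      by_contra hlt
      push_neg at hlt
      obtain ⟨i, hi⟩ : ∃ i, w i ≠ 0 := Function.ne_iff.mp hw0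
      have hones : ∀ i', i' ≠ i → w i' = 0 := by
        intro i' hne
        by_contra hne'
        have hsub : ({i', i} : Finset (Fin n)) ⊆ Finset.univ.filter (fun t => w t ≠ 0) := by
          intro t ht
          simp only [Finset.mem_insert, Finset.mem_singleton] at ht
          rcases ht with rfl | rfl <;> simp [hne', hi]
        have hcard : ({i', i} : Finset (Fin n)).card ≤ hammingNorm w :=
          Finset.card_le_card hsub
        rw [Finset.card_pair hne] at hcard
        omega
      have hvan : ∀ d ∈ D, d i = 0 := by
        intro d hd
        have h0 := hw d hd
        rw [Finset.sum_eq_single i (fun i' _ hne => by rw [hones i' hne, zero_mul])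
          (fun h => absurd (Finset.mem_univ i) h)] at h0
        exact (mul_eq_zero.mp h0).resolve_left hi
      have hPj : ∀ j, v j₀ * (b j : Fin n → F) i = v j * (b j₀ : Fin n → F) i := by
        intro j
        set x : Fin k → F := Pi.single j (v j₀) - Pi.single j₀ (v j) with hxdef
        have hx : ∑ j', x j' * v j' = 0 := by
          simp only [hxdef, Pi.sub_apply, sub_mul, Finset.sum_sub_distrib, Pi.single_apply,
            ite_mul, zero_mul]
          rw [Finset.sum_ite_eq' Finset.univ j (fun j' => v j₀ * v j'),
            Finset.sum_ite_eq' Finset.univ j₀ (fun j' => v j * v j')]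
          simp [mul_comm]
        have hm := hvan _ (hmemD x hx)
        rw [evalComb] at hm
        simp only [hxdef, Pi.sub_apply, sub_mul, Finset.sum_sub_distrib, Pi.single_apply,
          ite_mul, zero_mul] at hm
        rw [Finset.sum_ite_eq' Finset.univ j (fun j' => v j₀ * (b j' : Fin n → F) i),
          Finset.sum_ite_eq' Finset.univ j₀ (fun j' => v j * (b j' : Fin n → F) i)] at hm
        simp only [Finset.mem_univ, if_true] at hm
        exact sub_eq_zero.mp hm
      have hPi0 : (b j₀ : Fin n → F) i ≠ 0 := by
        intro h0
        apply col_ne_zero F hC b i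
        funext j
        have hj := hPj j
        rw [h0, mul_zero] at hj
        have : (b j : Fin n → F) i = 0 := by
          rcases mul_eq_zero.mp hj with h | h
          · exact absurd h hj₀
          · exact h
        simpa using this
      refine hv i (v j₀ * ((b j₀ : Fin n → F) i)⁻¹)
        (mul_ne_zero hj₀ (inv_ne_zero hPi0)) ?_
      funext j
      have hj := hPj j
      simp only [Pi.smul_apply, smul_eq_mul]
      field_simp
      linear_combination -hj
    exact hIso D hDle hgood
  · -- all points covered → isolated
    intro hall D hDle hD
    set ψ : (Fin k → F) →ₗ[F] (Fin n → F) := C.subtype.comp b.equivFun.symm.toLinearMap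
      with hψdef
    have hψ : ∀ x, ψ x = ((b.equivFun.symm x : C) : Fin n → F) := fun x => rfl
    set E : Submodule F (Fin k → F) := D.comap ψ with hEdef
    have hEne : E ≠ ⊤ := by
      intro htop
      have hCD : C ≤ D := by
        intro c hc
        have hm : b.equivFun (⟨c, hc⟩ : C) ∈ E := htop ▸ Submodule.mem_top
        have := hm
        rw [hEdef, Submodule.mem_comap, hψ, b.equivFun.symm_apply_apply] at this
        exact this
      have hDC : D = C := le_antisymm hDle hCD
      have h1 : Module.finrank F ↥D = k - 1 := hD.1
      rw [hDC, hC.1] at h1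
      omega
    obtain ⟨f, hf0, hfker⟩ := E.exists_le_ker_of_lt_top (lt_top_iff_ne_top.mpr hEne)
    set v : Fin k → F := fun j => f (Pi.single j 1) with hvdef
    have hfx : ∀ x, f x = ∑ j, x j * v j := by
      intro x
      rw [LinearMap.pi_apply_eq_sum_univ f x]
      refine Finset.sum_congr rfl fun j _ => ?_
      rw [smul_eq_mul, hvdef]
      congr 1
      congr 1
      funext j'
      simp [Pi.single_apply, eq_comm]
    have hv0 : v ≠ 0 := by
      intro h0
      apply hf0
      refine LinearMap.ext fun x => ?_
      rw [hfx x, h0]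
      simp
    obtain ⟨i, c, hc, hvc⟩ := hall v hv0
    have hvan : ∀ d ∈ D, d i = 0 := by
      intro d hd
      set x : Fin k → F := b.equivFun (⟨d, hDle hd⟩ : C) with hxdef
      have hdx : ((b.equivFun.symm x : C) : Fin n → F) = d := by
        rw [hxdef, b.equivFun.symm_apply_apply]
      have hxE : x ∈ E := by
        rw [hEdef, Submodule.mem_comap, hψ, hdx]
        exact hd
      have hfx0 : f x = 0 := hfker hxE
      rw [hfx] at hfx0
      have hdi : d i = ∑ j, x j * (b j : Fin n → F) i := by
        rw [← hdx, evalComb]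
      have hsum : ∑ j, x j * v j = c * ∑ j, x j * (b j : Fin n → F) i := by
        rw [Finset.mul_sum]
        refine Finset.sum_congr rfl fun j _ => ?_
        rw [hvc]
        simp only [Pi.smul_apply, smul_eq_mul]
        ring
      rw [hsum] at hfx0
      rw [hdi]
      rcases mul_eq_zero.mp hfx0 with h | h
      · exact absurd h hc
      · exact h
    have hmem : (Pi.single i 1 : Fin n → F) ∈ dualCode F n D := by
      intro d hd
      rw [sum_single_mul]
      exact hvan d hd
    have h2 := hD.2 _ hmem (single_one_ne_zero F n i)
    rw [hammingNorm_single_one] at h2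
    omega
end

section
/- If t < k and q^{k−t} > binomial(n,t), then C_t(n,k) is nonempty and contains no isolated codes, i.e., I_t(n,k) = ∅. -/
open Finset
open Module Submodule

variable (F : Type) [Field F] [Fintype F] [DecidableEq F]

/-- dot product as a linear map -/
def dotL (m : ℕ) (w : Fin m → F) : (Fin m → F) →ₗ[F] F where
  toFun u := ∑ i, w i * u i
  map_add' u v := by simp [mul_add, Finset.sum_add_distrib]
  map_smul' c u := by
    simp only [Pi.smul_apply, smul_eq_mul, RingHom.id_apply, Finset.mul_sum]
    exact Finset.sum_congr rfl fun i _ => by ring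

variable {F}

theorem my_exists_not_mem {V : Type} [Fintype V] (B : Finset V) (h : B.card < Fintype.card V) :
    ∃ x, x ∉ B := by
  by_contra hc
  push_neg at hc
  have hsub : (univ : Finset V) ⊆ B := fun x _ => hc x
  have := Finset.card_le_card hsub
  rw [Finset.card_univ] at this
  omega

theorem my_card_span_le {k m : ℕ} (s : Set (Fin k → F)) (hs : finrank F (span F s) ≤ m) :
    (Set.toFinite ((span F s : Submodule F (Fin k → F)) : Set (Fin k → F))).toFinset.card
      ≤ Fintype.card F ^ m := by
  classical
  have : Fintype ((span F s : Submodule F (Fin k → F)) : Set (Fin k → F)) := Fintype.ofFinite _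
  rw [Set.Finite.card_toFinset]
  have hcard : Fintype.card ((span F s : Submodule F (Fin k → F)) : Set (Fin k → F))
      = Fintype.card F ^ finrank F (span F s) := card_eq_pow_finrank (K := F)
  rw [hcard]
  exact Nat.pow_le_pow_right Fintype.card_pos hs

theorem my_smul_of_ker_le {M : Type} [AddCommGroup M] [Module F M] (ψ φ : M →ₗ[F] F)
    (h : ∀ x, ψ x = 0 → φ x = 0) : ∃ c : F, φ = c • ψ := by
  by_cases h0 : ∀ x, ψ x = 0
  · exact ⟨0, by ext y; simp [h y (h0 y)]⟩
  · push_neg at h0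
    obtain ⟨x, hx⟩ := h0
    refine ⟨φ x / ψ x, ?_⟩
    ext y
    have hker : ψ (y - (ψ y / ψ x) • x) = 0 := by
      simp only [map_sub, map_smul, smul_eq_mul]
      field_simp
      ring
    have h2 := h _ hker
    simp only [map_sub, map_smul, smul_eq_mul, sub_eq_zero] at h2
    simp only [LinearMap.smul_apply, smul_eq_mul]
    rw [h2]
    field_simp

set_option linter.unusedSectionVars false

theorem my_support_card {n : ℕ} (v : Fin n → F) : hammingNorm v = #{i | v i ≠ 0} := rfl

theorem my_exists_support_subset {n t : ℕ} (htn : t ≤ n) (v : Fin n → F)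
    (h : hammingNorm v ≤ t) : ∃ A : Finset (Fin n), A.card = t ∧ ∀ i ∉ A, v i = 0 := by
  obtain ⟨A, hsub, hcard⟩ := Finset.exists_superset_card_eq (n := t) h
    (by simpa using htn)
  refine ⟨A, hcard, fun i hi => ?_⟩
  by_contra hvi
  exact hi (hsub (by simpa using hvi))

theorem my_norm_castSucc {n : ℕ} (v : Fin (n+1) → F) :
    hammingNorm (fun i : Fin n => v i.castSucc) ≤ hammingNorm v := by
  rw [my_support_card, my_support_card]
  apply Finset.card_le_card_of_injOn Fin.castSucc
  · intro i hi
    simpa using hi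
  · exact fun a _ b _ h => Fin.castSucc_injective _ h

theorem my_norm_last {n t : ℕ} (v : Fin (n+1) → F) (hlast : v (Fin.last n) ≠ 0)
    (h : hammingNorm v ≤ t) :
    #{i : Fin n | v i.castSucc ≠ 0} + 1 ≤ t := by
  rw [my_support_card] at h
  set s : Finset (Fin n) := {i : Fin n | v i.castSucc ≠ 0} with hs
  have hsub : s.image Fin.castSucc ∪ {Fin.last n} ⊆ ({i : Fin (n+1) | v i ≠ 0} : Finset _) := by
    intro i hi
    simp only [Finset.mem_union, Finset.mem_image, Finset.mem_singleton, hs,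
      Finset.mem_filter, Finset.mem_univ, true_and] at hi ⊢
    rcases hi with ⟨j, hj, rfl⟩ | rfl
    · exact hj
    · exact hlast
  have hdisj : Fin.last n ∉ s.image Fin.castSucc := by
    simp only [Finset.mem_image]
    rintro ⟨j, _, hj⟩
    exact absurd hj (Fin.castSucc_lt_last j).ne
  have hcard : (s.image Fin.castSucc ∪ {Fin.last n}).card = s.card + 1 := by
    rw [Finset.union_comm, ← Finset.insert_eq, Finset.card_insert_of_notMem hdisj,
      Finset.card_image_of_injective _ (Fin.castSucc_injective _)]
  have := Finset.card_le_card hsub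
  omega

theorem my_count_short {n t : ℕ} (htn : t ≤ n) :
    #{v : Fin n → F | hammingNorm v ≤ t} ≤ n.choose t * Fintype.card F ^ t := by
  classical
  have hsub : ({v : Fin n → F | hammingNorm v ≤ t} : Finset _) ⊆
      (Finset.powersetCard t (univ : Finset (Fin n))).biUnion
        (fun A => {v : Fin n → F | ∀ i ∉ A, v i = 0}) := by
    intro v hv
    simp only [Finset.mem_filter, Finset.mem_univ, true_and] at hv
    obtain ⟨A, hcard, hA⟩ := my_exists_support_subset htn v hv
    simp only [Finset.mem_biUnion]
    exact ⟨A, Finset.mem_powersetCard.2 ⟨Finset.subset_univ _, hcard⟩,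
      by simp only [Finset.mem_filter, Finset.mem_univ, true_and]; exact hA⟩
  refine (Finset.card_le_card hsub).trans ?_
  refine (Finset.card_biUnion_le).trans ?_
  have hbound : ∀ A ∈ Finset.powersetCard t (univ : Finset (Fin n)),
      ({v : Fin n → F | ∀ i ∉ A, v i = 0} : Finset _).card ≤ Fintype.card F ^ t := by
    intro A hA
    have hAcard : A.card = t := (Finset.mem_powersetCard.1 hA).2
    have : ({v : Fin n → F | ∀ i ∉ A, v i = 0} : Finset _).card
        ≤ (Finset.univ : Finset (↥A → F)).card := by
      apply Finset.card_le_card_of_injOn (fun v (i : ↥A) => v i)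
      · intro v _; exact Finset.mem_univ _
      · intro a ha b hb hab
        simp only [Finset.coe_filter, Set.mem_setOf_eq] at ha hb
        funext i
        by_cases hi : i ∈ A
        · exact congrFun hab ⟨i, hi⟩
        · rw [ha.2 i hi, hb.2 i hi]
      
    refine this.trans ?_
    rw [Finset.card_univ, Fintype.card_fun, Fintype.card_coe, hAcard]
  calc _ ≤ ∑ _A ∈ Finset.powersetCard t (univ : Finset (Fin n)), Fintype.card F ^ t :=
        Finset.sum_le_sum hbound
    _ = n.choose t * Fintype.card F ^ t := by
        rw [Finset.sum_const, Finset.card_powersetCard, Finset.card_univ, Fintype.card_fin,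
          smul_eq_mul]

theorem my_mem_dualCode {n : ℕ} (C : Submodule F (Fin n → F)) (v : Fin n → F) :
    v ∈ dualCode F n C ↔ ∀ c ∈ C, ∑ i, v i * c i = 0 := Iff.rfl

theorem my_dotL_single {m : ℕ} (w : Fin m → F) (j : Fin m) :
    dotL F m w (Pi.single j 1) = w j := by
  simp only [dotL, LinearMap.coe_mk, AddHom.coe_mk]
  rw [Finset.sum_eq_single j] <;> simp +contextual [Pi.single_apply]

theorem my_not_isolated {n k t : ℕ} (hk : 0 < k) (hkn : k < n) (htk : t < k)
    (hq : Nat.choose n t < Fintype.card F ^ (k - t)) (C : Submodule F (Fin n → F))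
    (hC : goodCode F n t k C) :
    ∃ D : Submodule F (Fin n → F), D ≤ C ∧ goodCode F n t (k-1) D := by
  classical
  have htn : t ≤ n := le_of_lt (htk.trans hkn)
  have hq1 : 1 < Fintype.card F := Fintype.one_lt_card
  -- linear equivalence C ≃ F^k
  have hCk : finrank F ↥C = finrank F (Fin k → F) := by
    rw [hC.1, Module.finrank_fin_fun]
  let e : ↥C ≃ₗ[F] (Fin k → F) := LinearEquiv.ofFinrankEq _ _ hCk
  -- the functional on C induced by v ∈ F^n
  let φ : (Fin n → F) → (↥C →ₗ[F] F) := fun v => (dotL F n v) ∘ₗ C.subtype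
  let ρ : (↥C →ₗ[F] F) → (Fin k → F) := fun ψ j => ψ (e.symm (Pi.single j 1))
  -- key : every functional is recovered from its ρ-coordinates
  have hρ : ∀ ψ : ↥C →ₗ[F] F, ∀ c : ↥C, ψ c = ∑ j, (ρ ψ) j * (e c) j := by
    intro ψ c
    have hc : (e.symm) (∑ j, (e c) j • (Pi.single j 1 : Fin k → F)) = c := by
      have : (∑ j, (e c) j • (Pi.single j 1 : Fin k → F)) = e c := by
        funext i
        simp [Pi.single_apply, Finset.sum_ite_eq', mul_comm]
      rw [this, LinearEquiv.symm_apply_apply]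
    calc ψ c = ψ ((e.symm) (∑ j, (e c) j • (Pi.single j 1 : Fin k → F))) := by rw [hc]
      _ = ∑ j, (e c) j * ψ (e.symm (Pi.single j 1)) := by
          rw [map_sum, map_sum]
          refine Finset.sum_congr rfl fun j _ => ?_
          rw [map_smul, map_smul, smul_eq_mul]
      _ = ∑ j, (ρ ψ) j * (e c) j := Finset.sum_congr rfl fun j _ => mul_comm _ _
  -- the bad set
  let T : Finset (Fin k → F) :=
    ({v : Fin n → F | hammingNorm v ≤ t} : Finset _).image (fun v => ρ (φ v))
  have hT : T.card < Fintype.card (Fin k → F) := by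
    have h1 : T.card ≤ n.choose t * Fintype.card F ^ t :=
      le_trans (Finset.card_image_le) (my_count_short htn)
    have h2 : (n.choose t + 1) * Fintype.card F ^ t ≤ Fintype.card F ^ k := by
      calc (n.choose t + 1) * Fintype.card F ^ t
          ≤ Fintype.card F ^ (k-t) * Fintype.card F ^ t := by
            apply Nat.mul_le_mul_right; omega
        _ = Fintype.card F ^ k := by rw [← pow_add]; congr 1; omega
    have h3 : Fintype.card (Fin k → F) = Fintype.card F ^ k := by
      rw [Fintype.card_fun, Fintype.card_fin]
    have hpow : 0 < Fintype.card F ^ t := Nat.pow_pos Fintype.card_pos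
    rw [h3]; nlinarith
  obtain ⟨w, hw⟩ := my_exists_not_mem T hT
  -- the functional determined by w
  let ψ : ↥C →ₗ[F] F := (dotL F k w) ∘ₗ (e : ↥C →ₗ[F] (Fin k → F))
  have hρψ : ρ ψ = w := by
    funext j
    show (dotL F k w) (e (e.symm (Pi.single j 1))) = w j
    rw [LinearEquiv.apply_symm_apply]
    exact my_dotL_single w j
  -- ψ is nonzero
  have hψne : ∃ x : ↥C, ψ x ≠ 0 := by
    by_contra hc
    push_neg at hc
    have hw0 : w = 0 := by
      funext j
      have := hc (e.symm (Pi.single j 1))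
      rw [← hρψ]; exact this
    apply hw
    rw [hw0]
    apply Finset.mem_image.2
    refine ⟨0, by simp, ?_⟩
    have hφ0 : φ 0 = 0 := by ext x; simp [φ, dotL]
    rw [hφ0]
    funext j; simp [ρ]
  obtain ⟨x₀, hx₀⟩ := hψne
  -- range ψ is everything
  have hrange : LinearMap.range ψ = ⊤ := by
    rw [Submodule.eq_top_iff']
    intro y
    exact ⟨(y * (ψ x₀)⁻¹) • x₀, by rw [map_smul, smul_eq_mul, mul_assoc,
      inv_mul_cancel₀ hx₀, mul_one]⟩
  have hker : finrank F (LinearMap.ker ψ) = k - 1 := by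
    have := LinearMap.finrank_range_add_finrank_ker ψ
    rw [hrange, hC.1] at this
    have h1 : finrank F (⊤ : Submodule F F) = 1 := by
      rw [finrank_top, Module.finrank_self]
    omega
  refine ⟨(LinearMap.ker ψ).map C.subtype, Submodule.map_subtype_le _ _, ?_, ?_⟩
  · rw [Submodule.finrank_map_subtype_eq]
    exact hker
  · intro v hv hvne
    by_contra hwt
    push_neg at hwt
    have hwtle : hammingNorm v ≤ t := by omega
    -- φ v vanishes on ker ψ
    have hvker : ∀ x : ↥C, ψ x = 0 → φ v x = 0 := by
      intro x hx
      have hmem : (x : Fin n → F) ∈ (LinearMap.ker ψ).map C.subtype :=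
        ⟨x, hx, rfl⟩
      have := (my_mem_dualCode _ v).1 hv _ hmem
      simpa [φ, dotL] using this
    obtain ⟨c, hc⟩ := my_smul_of_ker_le ψ (φ v) hvker
    -- φ v is nonzero since v is short and C is good
    have hφvne : φ v ≠ 0 := by
      intro h0
      have hvdual : v ∈ dualCode F n C := by
        rw [my_mem_dualCode]
        intro c0 hc0
        have := congrFun (congrArg (fun (f : ↥C →ₗ[F] F) => f.toFun) h0) ⟨c0, hc0⟩
        simpa [φ, dotL] using this
      have := hC.2 v hvdual hvne
      omega
    have hcne : c ≠ 0 := by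
      rintro rfl
      rw [zero_smul] at hc
      exact hφvne hc
    -- ψ = φ (c⁻¹ • v)
    have hψeq : ψ = φ (c⁻¹ • v) := by
      have h1 : φ (c⁻¹ • v) = c⁻¹ • φ v := by
        ext x
        simp only [φ, dotL, LinearMap.coe_comp, Function.comp_apply, LinearMap.coe_mk,
          AddHom.coe_mk, LinearMap.smul_apply, smul_eq_mul, Pi.smul_apply, Finset.mul_sum]
        exact Finset.sum_congr rfl fun i _ => by ring
      rw [h1, hc, smul_smul, inv_mul_cancel₀ hcne, one_smul]
    -- contradiction with w ∉ T
    apply hw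
    rw [← hρψ, hψeq]
    apply Finset.mem_image.2
    refine ⟨c⁻¹ • v, ?_, rfl⟩
    simp only [Finset.mem_filter, Finset.mem_univ, true_and]
    exact le_trans (hammingNorm_smul_le_hammingNorm) hwtle


theorem my_range_snoc {m : ℕ} {V : Type} (P : Fin m → V) (x : V) :
    Set.range (Fin.snoc P x : Fin (m+1) → V) = insert x (Set.range P) := by
  ext y
  simp only [Set.mem_range, Set.mem_insert_iff]
  constructor
  · rintro ⟨i, rfl⟩
    rcases Fin.eq_castSucc_or_eq_last i with ⟨j, rfl⟩ | rfl
    · right; exact ⟨j, by rw [Fin.snoc_castSucc]⟩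
    · left; rw [Fin.snoc_last]
  · rintro (rfl | ⟨j, rfl⟩)
    · exact ⟨Fin.last m, by rw [Fin.snoc_last]⟩
    · exact ⟨j.castSucc, by rw [Fin.snoc_castSucc]⟩

theorem my_finrank_span_insert {k : ℕ} (s : Set (Fin k → F)) (x : Fin k → F)
    (hx : x ∉ span F s) :
    finrank F (span F (insert x s)) = finrank F (span F s) + 1 := by
  have hx0 : x ≠ 0 := fun h => hx (h ▸ (span F s).zero_mem)
  have hdis : (F ∙ x) ⊓ span F s = ⊥ := by
    rw [eq_bot_iff]
    intro y hy
    rw [Submodule.mem_inf] at hy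
    obtain ⟨hy1, hy2⟩ := hy
    obtain ⟨c, rfl⟩ := Submodule.mem_span_singleton.1 hy1
    rcases eq_or_ne c 0 with rfl | hc
    · simp
    · exfalso
      apply hx
      have hmem := (span F s).smul_mem c⁻¹ hy2
      rwa [smul_smul, inv_mul_cancel₀ hc, one_smul] at hmem
  have hsum := Submodule.finrank_sup_add_finrank_inf_eq (F ∙ x) (span F s)
  rw [hdis, finrank_bot, finrank_span_singleton hx0] at hsum
  rw [Submodule.span_insert]
  omega

/-- The family invariant for the greedy construction. -/
def GoodFam (t k m : ℕ) (P : Fin m → (Fin k → F)) : Prop :=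
  (∀ v : Fin m → F, ∑ i, v i • P i = 0 → v ≠ 0 → t + 1 ≤ hammingNorm v) ∧
  finrank F (span F (Set.range P)) = min m k

theorem my_step {n k t : ℕ} (hk : 0 < k) (hkn : k < n) (htk : t < k)
    (hq : Nat.choose n t < Fintype.card F ^ (k - t)) (m : ℕ) (hm : m < n)
    (P : Fin m → (Fin k → F)) (hP : GoodFam (F := F) t k m P) :
    ∃ P' : Fin (m+1) → (Fin k → F), GoodFam (F := F) t k (m+1) P' := by
  classical
  have hq1 : 1 < Fintype.card F := Fintype.one_lt_card
  -- choose the new vector x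
  obtain ⟨x, hx1, hx2⟩ : ∃ x : Fin k → F,
      (∀ s : Finset (Fin m), 1 ≤ t → s.card ≤ t - 1 → x ∉ span F (P '' ↑s)) ∧
      (m < k → x ∉ span F (Set.range P)) := by
    rcases lt_or_ge m k with hmk | hmk
    · -- m < k : pick x outside the span of everything so far
      have hne : span F (Set.range P) ≠ ⊤ := by
        intro h
        have := hP.2
        rw [h, finrank_top, Module.finrank_fin_fun] at this
        omega
      obtain ⟨x, hx⟩ : ∃ x, x ∉ span F (Set.range P) := by
        by_contra hc
        push_neg at hc
        exact hne (Submodule.eq_top_iff'.2 hc)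
      refine ⟨x, fun s _ _ hmem => hx ?_, fun _ => hx⟩
      exact span_mono (by rintro y ⟨i, _, rfl⟩; exact Set.mem_range_self i) hmem
    · -- m ≥ k
      rcases Nat.eq_zero_or_pos t with rfl | ht1
      · exact ⟨0, fun s hs => by omega, fun h => by omega⟩
      · -- avoid the union of spans of (t-1)-subsets
        let B : Finset (Fin k → F) := (Finset.powersetCard (t-1) (univ : Finset (Fin m))).biUnion
          (fun A => (Set.toFinite ((span F (P '' ↑A) : Submodule F (Fin k → F)) :
            Set (Fin k → F))).toFinset)
        have hB : B.card < Fintype.card (Fin k → F) := by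
          have h1 : B.card ≤ (Finset.powersetCard (t-1) (univ : Finset (Fin m))).card *
              Fintype.card F ^ (t-1) := by
            refine Finset.card_biUnion_le.trans ?_
            refine (Finset.sum_le_card_nsmul _ _ _ ?_).trans (by rw [smul_eq_mul])
            intro A hA
            have hAcard : A.card = t - 1 := (Finset.mem_powersetCard.1 hA).2
            refine my_card_span_le _ ?_
            rw [← Finset.coe_image]
            refine le_trans (finrank_span_finset_le_card (A.image P)) ?_
            exact le_trans Finset.card_image_le (le_of_eq hAcard)
          have h2 : (Finset.powersetCard (t-1) (univ : Finset (Fin m))).card = m.choose (t-1) := by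
            rw [Finset.card_powersetCard, Finset.card_univ, Fintype.card_fin]
          have h3 : m.choose (t-1) ≤ (n-1).choose (t-1) :=
            Nat.choose_le_choose _ (by omega)
          have h4 : (n-1).choose (t-1) ≤ n.choose t := by
            have hn : n - 1 + 1 = n := by omega
            have ht : t - 1 + 1 = t := by omega
            calc (n-1).choose (t-1) ≤ (n-1).choose (t-1) + (n-1).choose (t-1+1) :=
                  Nat.le_add_right _ _
              _ = (n-1+1).choose (t-1+1) := (Nat.choose_succ_succ' _ _).symm
              _ = n.choose t := by rw [hn, ht]
          have h5 : n.choose t * Fintype.card F ^ (t-1) < Fintype.card F ^ k := by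
            have hle : n.choose t ≤ Fintype.card F ^ (k-t) - 1 := by omega
            have hpow : 0 < Fintype.card F ^ (t-1) := Nat.pow_pos Fintype.card_pos
            have hexp : Fintype.card F ^ (k-t) * Fintype.card F ^ (t-1)
                = Fintype.card F ^ (k-1) := by
              rw [← pow_add]; congr 1; omega
            have hlt : Fintype.card F ^ (k-1) < Fintype.card F ^ k :=
              Nat.pow_lt_pow_right hq1 (by omega)
            have hm1 : n.choose t * Fintype.card F ^ (t-1)
                ≤ (Fintype.card F ^ (k-t) - 1) * Fintype.card F ^ (t-1) :=
              Nat.mul_le_mul_right _ hle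
            rw [Nat.sub_mul, hexp, one_mul] at hm1
            omega
          have h6 : Fintype.card (Fin k → F) = Fintype.card F ^ k := by
            rw [Fintype.card_fun, Fintype.card_fin]
          rw [h6]
          calc B.card ≤ m.choose (t-1) * Fintype.card F ^ (t-1) := by rw [← h2]; exact h1
            _ ≤ n.choose t * Fintype.card F ^ (t-1) :=
                Nat.mul_le_mul_right _ (h3.trans h4)
            _ < Fintype.card F ^ k := h5
        obtain ⟨x, hx⟩ := my_exists_not_mem B hB
        refine ⟨x, ?_, fun h => by omega⟩
        intro s _ hscard hmem
        obtain ⟨A, hsA, hAcard⟩ := Finset.exists_superset_card_eq hscard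
          (by rw [Fintype.card_fin]; omega)
        apply hx
        apply Finset.mem_biUnion.2
        refine ⟨A, Finset.mem_powersetCard.2 ⟨Finset.subset_univ _, hAcard⟩, ?_⟩
        rw [Set.Finite.mem_toFinset]
        exact span_mono (Set.image_mono hsA) hmem
  -- now verify the invariant for the extended family
  refine ⟨Fin.snoc P x, ?_, ?_⟩
  · -- dependency condition
    intro v hsum hvne
    rw [Fin.sum_univ_castSucc] at hsum
    simp only [Fin.snoc_castSucc, Fin.snoc_last] at hsum
    by_cases hlast : v (Fin.last m) = 0
    · -- reduces to the old family
      rw [hlast, zero_smul, add_zero] at hsum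
      have hvres : (fun i : Fin m => v i.castSucc) ≠ 0 := by
        intro h
        apply hvne
        funext i
        rcases Fin.eq_castSucc_or_eq_last i with ⟨j, rfl⟩ | rfl
        · exact congrFun h j
        · exact hlast
      exact le_trans (hP.1 _ hsum hvres) (my_norm_castSucc v)
    · -- the last coefficient is nonzero : x lies in a small span, contradiction
      by_contra hwt
      push_neg at hwt
      have ht1 : 1 ≤ t := by
        have h1 : 1 ≤ hammingNorm v := by
          rw [Nat.one_le_iff_ne_zero]
          exact fun h => hvne (hammingNorm_eq_zero.1 h)
        omega
      have hwtle : hammingNorm v ≤ t := by omega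
      set s : Finset (Fin m) := {i : Fin m | v i.castSucc ≠ 0} with hs
      have hscard : s.card ≤ t - 1 := by
        have h2 := my_norm_last v hlast hwtle
        rw [← hs] at h2
        omega
      apply hx1 s ht1 hscard
      have hxval : x = ∑ i ∈ s, (-(v (Fin.last m))⁻¹ * v i.castSucc) • P i := by
        have h1 : v (Fin.last m) • x = - ∑ i, v i.castSucc • P i := by
          rw [eq_neg_iff_add_eq_zero, add_comm]; exact hsum
        have h2 : x = (v (Fin.last m))⁻¹ • (v (Fin.last m) • x) := by
          rw [smul_smul, inv_mul_cancel₀ hlast, one_smul]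
        rw [h2, h1, smul_neg, Finset.smul_sum]
        rw [← Finset.sum_neg_distrib]
        rw [← Finset.sum_subset (Finset.subset_univ s)]
        · exact Finset.sum_congr rfl fun i _ => by rw [smul_smul, ← neg_smul, neg_mul]
        · intro i _ hi
          have hvi : v i.castSucc = 0 := by
            by_contra h
            exact hi (by simp [hs, h])
          rw [hvi, zero_smul, smul_zero, neg_zero]
      rw [hxval]
      apply Submodule.sum_mem
      intro i hi
      exact Submodule.smul_mem _ _ (Submodule.subset_span ⟨i, hi, rfl⟩)
  · -- finrank condition
    rw [my_range_snoc]
    rcases lt_or_ge m k with hmk | hmk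
    · rw [my_finrank_span_insert _ _ (hx2 hmk), hP.2]
      omega
    · have hup : finrank F (span F (insert x (Set.range P))) ≤ k := by
        have h1 := Submodule.finrank_le (span F (insert x (Set.range P)))
        rwa [Module.finrank_fin_fun] at h1
      have hlow : k ≤ finrank F (span F (insert x (Set.range P))) := by
        have hmono : span F (Set.range P) ≤ span F (insert x (Set.range P)) :=
          span_mono (Set.subset_insert _ _)
        have h1 := Submodule.finrank_mono hmono
        rw [hP.2] at h1
        omega
      omega


theorem my_exists_goodFam {n k t : ℕ} (hk : 0 < k) (hkn : k < n) (htk : t < k)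
    (hq : Nat.choose n t < Fintype.card F ^ (k - t)) :
    ∀ m, m ≤ n → ∃ P : Fin m → (Fin k → F), GoodFam (F := F) t k m P := by
  intro m
  induction m with
  | zero =>
    intro _
    refine ⟨fun _ => 0, fun v _ hv => absurd (Subsingleton.elim v 0) hv, ?_⟩
    rw [Set.range_eq_empty, Submodule.span_empty, finrank_bot]
    omega
  | succ m ih =>
    intro hmn
    obtain ⟨P, hP⟩ := ih (by omega)
    exact my_step hk hkn htk hq m (by omega) P hP

theorem my_exists_good {n k t : ℕ} (hk : 0 < k) (hkn : k < n) (htk : t < k)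
    (hq : Nat.choose n t < Fintype.card F ^ (k - t)) :
    ∃ C : Submodule F (Fin n → F), goodCode F n t k C := by
  obtain ⟨P, hP⟩ := my_exists_goodFam hk hkn htk hq n le_rfl
  have hspan : span F (Set.range P) = ⊤ := by
    apply Submodule.eq_top_of_finrank_eq
    rw [hP.2, Module.finrank_fin_fun]
    omega
  let G : (Fin k → F) →ₗ[F] (Fin n → F) := LinearMap.pi (fun i => dotL F k (P i))
  have hG : ∀ (x : Fin k → F) (i : Fin n), G x i = ∑ j, P i j * x j := fun x i => rfl
  have hGsingle : ∀ (j : Fin k) (i : Fin n), G (Pi.single j 1) i = P i j := by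
    intro j i
    rw [hG]
    rw [Finset.sum_eq_single j] <;> simp +contextual [Pi.single_apply]
  refine ⟨LinearMap.range G, ?_, ?_⟩
  · -- finrank
    have hinj : Function.Injective G := by
      rw [← LinearMap.ker_eq_bot, eq_bot_iff]
      intro x hx
      rw [LinearMap.mem_ker] at hx
      have hker : span F (Set.range P) ≤ LinearMap.ker (dotL F k x) := by
        rw [Submodule.span_le]
        rintro y ⟨i, rfl⟩
        rw [SetLike.mem_coe, LinearMap.mem_ker]
        have h1 : dotL F k x (P i) = ∑ j, P i j * x j := by
          show (∑ j, x j * P i j) = _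
          exact Finset.sum_congr rfl fun j _ => mul_comm _ _
        rw [h1, ← hG, hx]
        rfl
      have hx0 : x = 0 := by
        funext j
        have hmem : (Pi.single j 1 : Fin k → F) ∈ LinearMap.ker (dotL F k x) :=
          hker (hspan ▸ Submodule.mem_top)
        rw [LinearMap.mem_ker, my_dotL_single] at hmem
        exact hmem
      rw [hx0]
      exact Submodule.zero_mem _
    rw [LinearMap.finrank_range_of_inj hinj, Module.finrank_fin_fun]
  · -- dual distance
    intro v hv hvne
    have hdep : ∑ i, v i • P i = 0 := by
      funext j
      have hmem : G (Pi.single j 1) ∈ LinearMap.range G := ⟨_, rfl⟩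
      have h1 := (my_mem_dualCode _ v).1 hv _ hmem
      simp only [Finset.sum_apply, Pi.smul_apply, smul_eq_mul, Pi.zero_apply]
      rw [← h1]
      exact Finset.sum_congr rfl fun i _ => by rw [hGsingle]
    exact hP.1 v hdep hvne


/-- If `t < k` and `q^(k-t) > binomial(n,t)`, then `C_t(n,k)` is nonempty and
contains no isolated codes. -/
theorem no_isolated_of_large_q
    {n k t : ℕ} (hk : 0 < k) (hkn : k < n) (htk : t < k)
    (hq : Nat.choose n t < Fintype.card F ^ (k - t)) :
    (∃ C : Submodule F (Fin n → F), goodCode F n t k C) ∧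
    ∀ C : Submodule F (Fin n → F), goodCode F n t k C → ¬ IsIsolated F n t k C := by
  constructor
  · exact my_exists_good hk hkn htk hq
  · intro C hC hiso
    obtain ⟨D, hDle, hD⟩ := my_not_isolated hk hkn htk hq C hC
    exact hiso D hDle hD
end

section
/- Suppose X, Y ∈ C_t(n,k) with dim(X ∩ Y) = k−1 but X ∩ Y ∉ C_t(n,k−1). Then there exists a k-dimensional subspace Z of F_q^n with X ∩ Y ⊂ Z ⊂ X + Y such that Z ∉ C_t(n,k). -/
open Finset

variable (F : Type) [Field F] [Fintype F] [DecidableEq F]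

/-- If `X, Y ∈ C_t(n,k)` with `dim(X ∩ Y) = k-1` but `X ∩ Y ∉ C_t(n,k-1)`,
then there is a `k`-dimensional subspace `Z` with `X ∩ Y ⊂ Z ⊂ X + Y` and `Z ∉ C_t(n,k)`. -/
theorem exists_bad_code_on_line
    {n k t : ℕ} (hk : 0 < k) (hkn : k < n) (ht : t ≤ k)
    (X Y : Submodule F (Fin n → F)) (hX : goodCode F n t k X) (hY : goodCode F n t k Y)
    (hdim : Module.finrank F ↥(X ⊓ Y) = k - 1)
    (hbad : ¬ goodCode F n t (k-1) (X ⊓ Y)) :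
    ∃ Z : Submodule F (Fin n → F), Module.finrank F Z = k ∧
      X ⊓ Y < Z ∧ Z < X ⊔ Y ∧ ¬ goodCode F n t k Z := by
  classical
  have hB : ¬ ∀ v ∈ dualCode F n (X ⊓ Y), v ≠ 0 → t + 1 ≤ hammingNorm v :=
    fun hB => hbad ⟨hdim, hB⟩
  push_neg at hB
  obtain ⟨v, hv_mem, hv_ne, hv_wt⟩ := hB
  have hv_dual : ∀ c ∈ X ⊓ Y, ∑ i, v i * c i = 0 := hv_mem
  -- the linear functional x ↦ ∑ v i * x i
  let φ : (Fin n → F) →ₗ[F] F :=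
    { toFun := fun x => ∑ i, v i * x i
      map_add' := by
        intro a b
        simp [mul_add, Finset.sum_add_distrib]
      map_smul' := by
        intro r a
        simp [Finset.mul_sum, mul_left_comm] }
  have hsup : Module.finrank F ↥(X ⊔ Y) = k + 1 := by
    have h := Submodule.finrank_sup_add_finrank_inf_eq X Y
    rw [hX.1, hY.1, hdim] at h
    omega
  -- φ is nonzero on X ⊔ Y
  obtain ⟨w, hwW, hφw⟩ : ∃ w ∈ X ⊔ Y, φ w ≠ 0 := by
    by_contra h
    push_neg at h
    have hvX : v ∈ dualCode F n X := fun c hc => h c (le_sup_left (a := X) (b := Y) hc)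
    have := hX.2 v hvX hv_ne
    omega
  set Z := (X ⊔ Y) ⊓ LinearMap.ker φ with hZ
  have hrange : LinearMap.range φ = ⊤ := by
    rw [eq_top_iff]
    intro a _
    exact ⟨(a * (φ w)⁻¹) • w, by simp [mul_assoc, inv_mul_cancel₀ hφw]⟩
  have hker : Module.finrank F ↥(LinearMap.ker φ) = n - 1 := by
    have h := LinearMap.finrank_range_add_finrank_ker φ
    rw [hrange] at h
    simp [Module.finrank_self, Module.finrank_pi] at h
    omega
  have hZleW : Z ≤ X ⊔ Y := inf_le_left
  have hZne : Z ≠ X ⊔ Y := by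
    intro h
    have : w ∈ Z := h ▸ hwW
    exact hφw (this.2)
  have hZltW : Z < X ⊔ Y := lt_of_le_of_ne hZleW hZne
  have hZlt : Module.finrank F ↥Z < k + 1 := by
    rw [← hsup]
    exact Submodule.finrank_lt_finrank_of_lt hZltW
  have hZge : k ≤ Module.finrank F ↥Z := by
    have h := Submodule.finrank_sup_add_finrank_inf_eq (X ⊔ Y) (LinearMap.ker φ)
    have hle : Module.finrank F ↥((X ⊔ Y) ⊔ LinearMap.ker φ) ≤ n := by
      have := Submodule.finrank_le ((X ⊔ Y) ⊔ LinearMap.ker φ)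
      simpa [Module.finrank_pi] using this
    rw [← hZ, hsup, hker] at h
    omega
  have hZrank : Module.finrank F ↥Z = k := by omega
  have hXYleZ : X ⊓ Y ≤ Z := by
    intro c hc
    exact ⟨Submodule.mem_sup_left hc.1, hv_dual c hc⟩
  have hXYltZ : X ⊓ Y < Z := by
    refine lt_of_le_of_ne hXYleZ ?_
    intro h
    rw [← h, hdim] at hZrank
    omega
  refine ⟨Z, hZrank, hXYltZ, hZltW, ?_⟩
  intro hg
  have hvZ : v ∈ dualCode F n Z := fun c hc => hc.2
  have := hg.2 v hvZ hv_ne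
  omega
end

section
/- Let X, Y ∈ C_t(n,k) be distinct with dim(X ∩ Y) = k−1. Then X ∩ Y ∈ C_t(n,k−1) if and only if every k-dimensional subspace Z of F_q^n with X ∩ Y ⊆ Z ⊆ X + Y belongs to C_t(n,k). (This expresses the transparency of the inclusion embedding of the geometry P_t(n,k) into the Grassmann geometry: the line of the Grassmann geometry through X and Y is entirely contained in C_t(n,k) if and only if X and Y are adjacent in Λ_t(n,k).) -/
open Finset

variable (F : Type) [Field F] [Fintype F] [DecidableEq F]

/-- For distinct `X, Y ∈ C_t(n,k)` with `dim(X ∩ Y) = k-1`, one has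
`X ∩ Y ∈ C_t(n,k-1)` iff every `k`-dimensional subspace `Z` with `X ∩ Y ⊆ Z ⊆ X + Y`
belongs to `C_t(n,k)` (transparency of the embedding of `P_t(n,k)` into the Grassmann
geometry). -/
theorem transparency
    {n k t : ℕ} (hk : 0 < k) (hkn : k < n) (ht : t ≤ k)
    (X Y : Submodule F (Fin n → F)) (hXY : X ≠ Y)
    (hX : goodCode F n t k X) (hY : goodCode F n t k Y)
    (hdim : Module.finrank F ↥(X ⊓ Y) = k - 1) :
    goodCode F n t (k-1) (X ⊓ Y) ↔
      ∀ Z : Submodule F (Fin n → F), Module.finrank F Z = k →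
        X ⊓ Y ≤ Z → Z ≤ X ⊔ Y → goodCode F n t k Z := by
  have hmem : ∀ (C : Submodule F (Fin n → F)) (v : Fin n → F),
      v ∈ dualCode F n C ↔ ∀ c ∈ C, ∑ i, v i * c i = 0 := fun C v => Iff.rfl
  constructor
  · intro hW Z hZk hWZ _
    exact ⟨hZk, fun v hv hv0 => hW.2 v (fun c hc => hv c (hWZ hc)) hv0⟩
  · intro h
    refine ⟨hdim, fun v hv hv0 => ?_⟩
    by_cases hcase : ∀ s ∈ X ⊔ Y, ∑ i, v i * s i = 0
    · exact hX.2 v (fun c hc => hcase c (Submodule.mem_sup_left hc)) hv0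
    · push_neg at hcase
      obtain ⟨s, hsS, hs0⟩ := hcase
      set φ : (Fin n → F) →ₗ[F] F :=
        { toFun := fun c => ∑ i, v i * c i
          map_add' := by intro a b; simp [mul_add, Finset.sum_add_distrib]
          map_smul' := by intro r a; simp [Finset.mul_sum, mul_left_comm] } with hφ
      set S := X ⊔ Y with hSdef
      have hS : Module.finrank F ↥S = k + 1 := by
        rw [hSdef]
        have h2 := Submodule.finrank_sup_add_finrank_inf_eq X Y
        rw [hdim, hX.1, hY.1] at h2
        omega
      set ψ : ↥S →ₗ[F] F := φ.comp S.subtype with hψ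
      have hrange : Module.finrank F ↥(LinearMap.range ψ) = 1 := by
        have hle : Module.finrank F ↥(LinearMap.range ψ) ≤ 1 := by
          simpa using (LinearMap.range ψ).finrank_le
        have hne : LinearMap.range ψ ≠ ⊥ := by
          intro hbot
          have : ψ ⟨s, hsS⟩ = 0 := by
            have := LinearMap.mem_range_self ψ ⟨s, hsS⟩
            rw [hbot] at this
            simpa using this
          exact hs0 this
        have hpos : 0 < Module.finrank F ↥(LinearMap.range ψ) := by
          rcases Submodule.ne_bot_iff _ |>.1 hne with ⟨x, hx, hx0⟩
          exact Module.finrank_pos_iff.2 ⟨⟨⟨x, hx⟩, 0, by simpa using hx0⟩⟩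
        omega
      have hker : Module.finrank F ↥(LinearMap.ker ψ) = k := by
        have := LinearMap.finrank_range_add_finrank_ker ψ
        rw [hrange, hS] at this
        omega
      set Z := S ⊓ LinearMap.ker φ with hZdef
      have hZfin : Module.finrank F ↥Z = k := by
        have hkc : LinearMap.ker ψ = Submodule.comap S.subtype (LinearMap.ker φ) :=
          LinearMap.ker_comp _ _
        have hmap : Submodule.map S.subtype (Submodule.comap S.subtype (LinearMap.ker φ))
            = S ⊓ LinearMap.ker φ := Submodule.map_comap_subtype _ _
        have := Submodule.finrank_map_subtype_eq S (Submodule.comap S.subtype (LinearMap.ker φ))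
        rw [hmap] at this
        rw [hZdef, this, ← hkc, hker]
      have hWS : X ⊓ Y ≤ S := by
        rw [hSdef]; exact inf_le_left.trans le_sup_left
      have hWZ : X ⊓ Y ≤ Z := le_inf hWS (fun c hc => hv c hc)
      exact (h Z hZfin hWZ inf_le_left).2 v (fun c hc => hc.2) hv0
end
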